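/- arXiv:1909.09630 — 4 statements merged into one kernel-verified Lean document; each statement's English description precedes it below -/
import Mathlib

section
/- Fix ε > 0, β ∈ (0,1), an even integer d > 4(e^{2ε}−1)²·ln(2/β), and n ε-private randomizers R_1,…,R_n from [d] to a countable message set 𝒴. If H is sampled uniformly among subsets of [d] of size d/2, then with probability at least 5/6 over the choice of H, both of the following hold with v = (e^{2ε}−1)·√((4/d)·ln(2/β)): for every i ∈ [n], Pr[ R_i(U) ∈ Leak(v, H, R_i) ] < 6βn, and for every i ∈ [n], Pr[ R_i(U_H) ∈ Leak(v, H, R_i) ] < 6·e^ε·βn. -/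
open scoped Classical

/-- `probU R S y` is the probability that a sample from `R(U_S)` (draw `x`
uniformly from `S`, then sample a message from `R x`) equals `y`, where
`R x y` is the probability that randomizer `R` on input `x` outputs `y`. -/
noncomputable def probU {d : ℕ} {Y : Type*} (R : Fin d → Y → ℝ)
    (S : Finset (Fin d)) (y : Y) : ℝ :=
  (∑ x ∈ S, R x y) / (S.card : ℝ)

/-- A message `y` is `v`-leaky with respect to `H, R` if
`|ln (Pr[R(U_H) = y] / Pr[R(U) = y])| > v`. -/
noncomputable def leaky {d : ℕ} {Y : Type*} (R : Fin d → Y → ℝ)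
    (H : Finset (Fin d)) (v : ℝ) (y : Y) : Prop :=
  v < |Real.log (probU R H y / probU R Finset.univ y)|

/-- `probLeak R S H v` is `Pr[R(U_S) ∈ Leak(v, H, R)]`, the probability that a
sample from `R(U_S)` lands in the set of `v`-leaky messages w.r.t. `H, R`. -/
noncomputable def probLeak {d : ℕ} {Y : Type*} (R : Fin d → Y → ℝ)
    (S H : Finset (Fin d)) (v : ℝ) : ℝ :=
  ∑' y : Y, if leaky R H v y then probU R S y else 0

open Finset

lemma pair_exp_le (lam c x y : ℝ) (h : |x - y| ≤ c) :
    Real.exp (lam * x) + Real.exp (lam * y)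
      ≤ 2 * Real.exp (lam * (x + y) / 2 + lam ^ 2 * c ^ 2 / 8) := by
  have h1 : Real.exp (lam * x) + Real.exp (lam * y)
      = 2 * Real.exp (lam * (x + y) / 2) * Real.cosh (lam * (x - y) / 2) := by
    rw [Real.cosh_eq]
    have e1 : lam * x = lam * (x + y) / 2 + lam * (x - y) / 2 := by ring
    have e2 : lam * y = lam * (x + y) / 2 + -(lam * (x - y) / 2) := by ring
    rw [e1, e2, Real.exp_add, Real.exp_add]
    ring
  rw [h1]
  have h2 : Real.cosh (lam * (x - y) / 2) ≤ Real.exp ((lam * (x - y) / 2) ^ 2 / 2) :=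
    Real.cosh_le_exp_half_sq _
  have h3 : (lam * (x - y) / 2) ^ 2 / 2 ≤ lam ^ 2 * c ^ 2 / 8 := by
    have : (x - y) ^ 2 ≤ c ^ 2 := sq_le_sq' (by linarith [abs_le.1 h]) (abs_le.1 h).2
    have h4 : lam ^ 2 * (x-y) ^ 2 ≤ lam ^ 2 * c ^ 2 :=
      mul_le_mul_of_nonneg_left this (sq_nonneg _)
    nlinarith
  calc 2 * Real.exp (lam * (x + y) / 2) * Real.cosh (lam * (x - y) / 2)
      ≤ 2 * Real.exp (lam * (x + y) / 2) * Real.exp (lam ^ 2 * c ^ 2 / 8) := by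
        apply mul_le_mul_of_nonneg_left (h2.trans (Real.exp_le_exp.2 h3))
        positivity
    _ = 2 * Real.exp (lam * (x + y) / 2 + lam ^ 2 * c ^ 2 / 8) := by
        rw [mul_assoc, ← Real.exp_add]


lemma exists_perm_image {α : Type*} [Fintype α] [DecidableEq α] {s t : Finset α}
    (h : s.card = t.card) : ∃ σ : Equiv.Perm α, s.image σ = t := by
  have e1 : {x // x ∈ s} ≃ {x // x ∈ t} := Finset.equivOfCardEq h
  have e2 : {x // ¬ x ∈ s} ≃ {x // ¬ x ∈ t} := by
    apply Fintype.equivOfCardEq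
    rw [Fintype.card_subtype_compl, Fintype.card_subtype_compl]
    congr 1 <;> simpa using h
  refine ⟨Equiv.subtypeCongr e1 e2, ?_⟩
  apply Finset.eq_of_subset_of_card_le
  · intro y hy
    simp only [Finset.mem_image] at hy
    obtain ⟨x, hx, rfl⟩ := hy
    have : Equiv.subtypeCongr e1 e2 x = (e1 ⟨x, hx⟩ : α) := by
      simp [Equiv.subtypeCongr, hx]
    rw [this]
    exact (e1 ⟨x, hx⟩).2
  · rw [Finset.card_image_of_injective _ (Equiv.injective _), h]


private def tau {h : ℕ} (A : Finset (Fin h)) : Equiv.Perm (Fin h × Bool) :=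
  Function.Involutive.toPerm (fun x => (x.1, if x.1 ∈ A then !x.2 else x.2))
    (by intro x; by_cases hx : x.1 ∈ A <;> simp [hx])

private lemma tau_apply_true {h : ℕ} (A : Finset (Fin h)) (j : Fin h) :
    tau A (j, true) = if j ∈ A then ((j, false) : Fin h × Bool) else (j, true) := by
  by_cases hj : j ∈ A <;> simp [tau, Function.Involutive.toPerm, hj]

lemma mgf_pairs {h : ℕ} (b : Fin h × Bool → ℝ) (c lam : ℝ)
    (hsum : ∑ x, b x = 0) (hc : ∀ x x', |b x - b x'| ≤ c) :
    ∑ σ : Equiv.Perm (Fin h × Bool), Real.exp (lam * ∑ j : Fin h, b (σ (j, true)))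
      ≤ (Fintype.card (Equiv.Perm (Fin h × Bool))) *
        Real.exp (lam ^ 2 * h * c ^ 2 / 8) := by
  set F : Equiv.Perm (Fin h × Bool) → ℝ :=
    fun σ => Real.exp (lam * ∑ j : Fin h, b (σ (j, true))) with hF
  have step1 : ∀ A : Finset (Fin h),
      ∑ σ : Equiv.Perm (Fin h × Bool), F (σ * tau A) = ∑ σ, F σ := by
    intro A
    exact Fintype.sum_equiv (Equiv.mulRight (tau A)) _ _ (fun σ => rfl)
  have step2 : ∀ σ : Equiv.Perm (Fin h × Bool),
      ∑ A ∈ (univ : Finset (Fin h)).powerset, F (σ * tau A)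
      = ∏ j : Fin h, (Real.exp (lam * b (σ (j, false))) + Real.exp (lam * b (σ (j, true)))) := by
    intro σ
    rw [Finset.prod_add]
    apply Finset.sum_congr rfl
    intro A hA
    have key : F (σ * tau A) = ∏ j : Fin h,
        (if j ∈ A then Real.exp (lam * b (σ (j, false))) else Real.exp (lam * b (σ (j, true)))) := by
      rw [hF]
      simp only [Equiv.Perm.mul_apply, tau_apply_true]
      rw [Finset.mul_sum, Real.exp_sum]
      apply Finset.prod_congr rfl
      intro j _
      by_cases hj : j ∈ A <;> simp [hj]
    rw [key, Finset.prod_ite]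
    congr 1
    · apply Finset.prod_congr _ (fun _ _ => rfl)
      simp [Finset.filter_mem_eq_inter]
    · apply Finset.prod_congr _ (fun _ _ => rfl)
      rw [Finset.sdiff_eq_filter]
  have step3 : ∀ σ : Equiv.Perm (Fin h × Bool),
      ∏ j : Fin h, (Real.exp (lam * b (σ (j, false))) + Real.exp (lam * b (σ (j, true))))
      ≤ 2 ^ h * Real.exp (lam ^ 2 * h * c ^ 2 / 8) := by
    intro σ
    have hb : ∑ j : Fin h, (b (σ (j, false)) + b (σ (j, true))) = 0 := by
      have h0 := Equiv.sum_comp σ b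
      rw [hsum] at h0
      rw [← h0, Fintype.sum_prod_type]
      apply Finset.sum_congr rfl
      intro j _
      rw [Fintype.sum_bool]
      ring
    calc ∏ j : Fin h, (Real.exp (lam * b (σ (j, false))) + Real.exp (lam * b (σ (j, true))))
        ≤ ∏ j : Fin h, 2 * Real.exp (lam * (b (σ (j, false)) + b (σ (j, true))) / 2
              + lam ^ 2 * c ^ 2 / 8) := by
          apply Finset.prod_le_prod
          · intro j _; positivity
          · intro j _; exact pair_exp_le lam c _ _ (hc _ _)
      _ = 2 ^ h * Real.exp (lam ^ 2 * h * c ^ 2 / 8) := by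
          rw [Finset.prod_mul_distrib, Finset.prod_const, ← Real.exp_sum]
          simp only [Finset.card_univ, Fintype.card_fin]
          congr 1
          rw [Finset.sum_add_distrib, Finset.sum_const, ← Finset.sum_div, ← Finset.mul_sum, hb]
          simp only [Finset.card_univ, Fintype.card_fin, nsmul_eq_mul]
          ring
  have key : (2 ^ h : ℝ) * ∑ σ, F σ
      ≤ (2 ^ h : ℝ) * ((Fintype.card (Equiv.Perm (Fin h × Bool)))
          * Real.exp (lam ^ 2 * h * c ^ 2 / 8)) := by
    calc (2 ^ h : ℝ) * ∑ σ, F σ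
        = ∑ _A ∈ (univ : Finset (Fin h)).powerset, ∑ σ, F σ := by
          rw [Finset.sum_const, Finset.card_powerset, Finset.card_univ, Fintype.card_fin,
            nsmul_eq_mul]
          push_cast
          ring
      _ = ∑ A ∈ (univ : Finset (Fin h)).powerset, ∑ σ, F (σ * tau A) := by
          apply Finset.sum_congr rfl
          intro A _
          rw [step1 A]
      _ = ∑ σ : Equiv.Perm (Fin h × Bool), ∑ A ∈ (univ : Finset (Fin h)).powerset, F (σ * tau A) :=
          Finset.sum_comm
      _ ≤ ∑ _σ : Equiv.Perm (Fin h × Bool), (2 ^ h : ℝ) * Real.exp (lam ^ 2 * h * c ^ 2 / 8) := by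
          apply Finset.sum_le_sum
          intro σ _
          rw [step2 σ]
          exact step3 σ
      _ = (2 ^ h : ℝ) * ((Fintype.card (Equiv.Perm (Fin h × Bool)))
            * Real.exp (lam ^ 2 * h * c ^ 2 / 8)) := by
          rw [Finset.sum_const, Finset.card_univ, nsmul_eq_mul]
          ring
  have h2 : (0 : ℝ) < 2 ^ h := by positivity
  exact le_of_mul_le_mul_left key h2


section fiber
variable {h : ℕ}

private def FH (h : ℕ) : Finset (Fin h × Bool) :=
  Finset.univ.map ⟨fun j => (j, true), by intro a b hab; simpa using hab⟩

private lemma card_FH : (FH h).card = h := by simp [FH]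

private def phi (σ : Equiv.Perm (Fin h × Bool)) : Finset (Fin h × Bool) :=
  (FH h).image σ

private lemma phi_mem (σ : Equiv.Perm (Fin h × Bool)) :
    phi σ ∈ Finset.powersetCard h (univ : Finset (Fin h × Bool)) := by
  rw [Finset.mem_powersetCard]
  exact ⟨Finset.subset_univ _, by rw [phi, Finset.card_image_of_injective _ σ.injective, card_FH]⟩

private lemma phi_fiber_card_eq {H H' : Finset (Fin h × Bool)}
    (hH : H ∈ Finset.powersetCard h (univ : Finset (Fin h × Bool)))
    (hH' : H' ∈ Finset.powersetCard h (univ : Finset (Fin h × Bool))) :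
    ((univ : Finset (Equiv.Perm (Fin h × Bool))).filter (fun σ => phi σ = H)).card
      = ((univ : Finset (Equiv.Perm (Fin h × Bool))).filter (fun σ => phi σ = H')).card := by
  rw [Finset.mem_powersetCard] at hH hH'
  obtain ⟨ρ, hρ⟩ := exists_perm_image (hH.2.trans hH'.2.symm)
  apply Finset.card_bij' (fun σ _ => ρ * σ) (fun σ _ => ρ⁻¹ * σ)
  · intro σ hσ
    simp only [Finset.mem_filter, Finset.mem_univ, true_and] at hσ ⊢
    rw [phi] at hσ ⊢
    have h1 : (FH h).image (⇑(ρ * σ)) = ((FH h).image ⇑σ).image ⇑ρ := by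
      rw [Finset.image_image]; rfl
    rw [h1, hσ, hρ]
  · intro σ hσ
    simp only [Finset.mem_filter, Finset.mem_univ, true_and] at hσ ⊢
    rw [phi] at hσ ⊢
    have h1 : (FH h).image (⇑(ρ⁻¹ * σ)) = ((FH h).image ⇑σ).image ⇑(ρ⁻¹) := by
      rw [Finset.image_image]; rfl
    rw [h1, hσ, ← hρ, Finset.image_image]
    have h2 : (⇑(ρ⁻¹) ∘ ⇑ρ) = id := by
      funext x; simp
    rw [h2, Finset.image_id]
  · intro σ _; group
  · intro σ _; group

private lemma phi_surj {H : Finset (Fin h × Bool)}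
    (hH : H ∈ Finset.powersetCard h (univ : Finset (Fin h × Bool))) :
    ∃ σ : Equiv.Perm (Fin h × Bool), phi σ = H := by
  rw [Finset.mem_powersetCard] at hH
  obtain ⟨σ, hσ⟩ := exists_perm_image (show (FH h).card = H.card by rw [card_FH, hH.2])
  exact ⟨σ, hσ⟩

lemma mgf_subsets_pairs (b : Fin h × Bool → ℝ) (c lam : ℝ)
    (hsum : ∑ x, b x = 0) (hc : ∀ x x', |b x - b x'| ≤ c) :
    ∑ H ∈ Finset.powersetCard h (univ : Finset (Fin h × Bool)),
        Real.exp (lam * ∑ x ∈ H, b x)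
      ≤ ((Finset.powersetCard h (univ : Finset (Fin h × Bool))).card : ℝ) *
        Real.exp (lam ^ 2 * h * c ^ 2 / 8) := by
  classical
  set P := Finset.powersetCard h (univ : Finset (Fin h × Bool)) with hP
  set g : Finset (Fin h × Bool) → ℝ := fun H => Real.exp (lam * ∑ x ∈ H, b x) with hg
  set K := ((univ : Finset (Equiv.Perm (Fin h × Bool))).filter (fun σ => phi σ = FH h)).card with hK
  have hFHmem : FH h ∈ P := by
    rw [hP, Finset.mem_powersetCard]; exact ⟨Finset.subset_univ _, card_FH⟩
  have fiber_card : ∀ H ∈ P,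
      ((univ : Finset (Equiv.Perm (Fin h × Bool))).filter (fun σ => phi σ = H)).card = K :=
    fun H hH => phi_fiber_card_eq hH hFHmem
  have himg : (univ : Finset (Equiv.Perm (Fin h × Bool))).image phi = P := by
    apply Finset.Subset.antisymm
    · intro H hH
      simp only [Finset.mem_image] at hH
      obtain ⟨σ, _, rfl⟩ := hH
      exact phi_mem σ
    · intro H hH
      obtain ⟨σ, hσ⟩ := phi_surj hH
      exact Finset.mem_image.2 ⟨σ, Finset.mem_univ σ, hσ⟩
  have hsum_comp : ∀ G : Finset (Fin h × Bool) → ℝ,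
      ∑ σ : Equiv.Perm (Fin h × Bool), G (phi σ) = ∑ H ∈ P, (K : ℝ) * G H := by
    intro G
    rw [Finset.sum_comp G phi, himg]
    apply Finset.sum_congr rfl
    intro H hH
    rw [fiber_card H hH, nsmul_eq_mul]
  have hK_pos : 0 < K := by
    rw [hK, Finset.card_pos]
    refine ⟨1, Finset.mem_filter.2 ⟨Finset.mem_univ _, ?_⟩⟩
    rw [phi]
    simp
  have hcard_perm : (Fintype.card (Equiv.Perm (Fin h × Bool)) : ℝ) = (K : ℝ) * P.card := by
    have h1 := hsum_comp (fun _ => (1 : ℝ))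
    simp only [Finset.sum_const, Finset.card_univ, nsmul_eq_mul, mul_one] at h1
    rw [h1, mul_comm]
  have hphi_sum : ∀ σ : Equiv.Perm (Fin h × Bool),
      g (phi σ) = Real.exp (lam * ∑ j : Fin h, b (σ (j, true))) := by
    intro σ
    rw [hg]
    simp only
    congr 2
    rw [phi, Finset.sum_image (fun x _ y _ hxy => σ.injective hxy), FH, Finset.sum_map]
    rfl
  have key : (K : ℝ) * ∑ H ∈ P, g H ≤ (K : ℝ) * ((P.card : ℝ) *
      Real.exp (lam ^ 2 * h * c ^ 2 / 8)) := by
    calc (K : ℝ) * ∑ H ∈ P, g H = ∑ H ∈ P, (K : ℝ) * g H := by rw [Finset.mul_sum]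
      _ = ∑ σ : Equiv.Perm (Fin h × Bool), g (phi σ) := (hsum_comp g).symm
      _ = ∑ σ : Equiv.Perm (Fin h × Bool), Real.exp (lam * ∑ j : Fin h, b (σ (j, true))) :=
          Finset.sum_congr rfl (fun σ _ => hphi_sum σ)
      _ ≤ (Fintype.card (Equiv.Perm (Fin h × Bool))) * Real.exp (lam ^ 2 * h * c ^ 2 / 8) :=
          mgf_pairs b c lam hsum hc
      _ = (K : ℝ) * ((P.card : ℝ) * Real.exp (lam ^ 2 * h * c ^ 2 / 8)) := by
          rw [hcard_perm]; ring
  have hKr : (0 : ℝ) < K := by exact_mod_cast hK_pos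
  exact le_of_mul_le_mul_left key hKr
end fiber


lemma mgf_subsets {d h : ℕ} (hdh : d = 2 * h) (b : Fin d → ℝ) (c lam : ℝ)
    (hsum : ∑ x, b x = 0) (hc : ∀ x x', |b x - b x'| ≤ c) :
    ∑ H ∈ Finset.powersetCard h (univ : Finset (Fin d)), Real.exp (lam * ∑ x ∈ H, b x)
      ≤ ((Finset.powersetCard h (univ : Finset (Fin d))).card : ℝ) *
        Real.exp (lam ^ 2 * h * c ^ 2 / 8) := by
  have hcard : Fintype.card (Fin h × Bool) = Fintype.card (Fin d) := by
    simp [hdh, mul_comm]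
  set e : (Fin h × Bool) ≃ Fin d := Fintype.equivOfCardEq hcard with he
  have htrans : ∑ H ∈ Finset.powersetCard h (univ : Finset (Fin d)),
      Real.exp (lam * ∑ x ∈ H, b x)
      = ∑ H ∈ Finset.powersetCard h (univ : Finset (Fin h × Bool)),
          Real.exp (lam * ∑ x ∈ H, b (e x)) := by
    apply Finset.sum_nbij' (fun H => H.map e.symm.toEmbedding) (fun H => H.map e.toEmbedding)
    · intro H hH
      rw [Finset.mem_powersetCard] at hH ⊢
      exact ⟨Finset.subset_univ _, by rw [Finset.card_map, hH.2]⟩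
    · intro H hH
      rw [Finset.mem_powersetCard] at hH ⊢
      exact ⟨Finset.subset_univ _, by rw [Finset.card_map, hH.2]⟩
    · intro H _
      ext x
      simp
    · intro H _
      ext x
      simp
    · intro H _
      congr 1
      rw [Finset.sum_map]
      simp
  have hcard2 : (Finset.powersetCard h (univ : Finset (Fin d))).card
      = (Finset.powersetCard h (univ : Finset (Fin h × Bool))).card := by
    rw [Finset.card_powersetCard, Finset.card_powersetCard, Finset.card_univ, Finset.card_univ,
      hcard]
  rw [htrans, hcard2]
  exact mgf_subsets_pairs (fun x => b (e x)) c lam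
    (by rw [Equiv.sum_comp e b, hsum]) (fun x x' => hc _ _)

lemma chernoff_count {d h : ℕ} (hdh : d = 2 * h) (hh : 0 < h) (b : Fin d → ℝ) (c s : ℝ)
    (hsum : ∑ x, b x = 0) (hc : ∀ x x', |b x - b x'| ≤ c) (hcpos : 0 < c) (hs : 0 < s) :
    (((Finset.powersetCard h (univ : Finset (Fin d))).filter
        (fun H => s ≤ ∑ x ∈ H, b x)).card : ℝ)
      ≤ ((Finset.powersetCard h (univ : Finset (Fin d))).card : ℝ) *
        Real.exp (-(2 * s ^ 2 / (h * c ^ 2))) := by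
  set lam := 4 * s / (h * c ^ 2) with hlam
  have hlam_pos : 0 < lam := by
    rw [hlam]
    positivity
  set P := Finset.powersetCard h (univ : Finset (Fin d)) with hP
  have key1 : ((P.filter (fun H => s ≤ ∑ x ∈ H, b x)).card : ℝ) * Real.exp (lam * s)
      ≤ ∑ H ∈ P, Real.exp (lam * ∑ x ∈ H, b x) := by
    calc ((P.filter (fun H => s ≤ ∑ x ∈ H, b x)).card : ℝ) * Real.exp (lam * s)
        = ∑ _H ∈ P.filter (fun H => s ≤ ∑ x ∈ H, b x), Real.exp (lam * s) := by
          rw [Finset.sum_const, nsmul_eq_mul]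
      _ ≤ ∑ H ∈ P.filter (fun H => s ≤ ∑ x ∈ H, b x), Real.exp (lam * ∑ x ∈ H, b x) := by
          apply Finset.sum_le_sum
          intro H hH
          apply Real.exp_le_exp.2
          exact mul_le_mul_of_nonneg_left (Finset.mem_filter.1 hH).2 hlam_pos.le
      _ ≤ ∑ H ∈ P, Real.exp (lam * ∑ x ∈ H, b x) := by
          apply Finset.sum_le_sum_of_subset_of_nonneg (Finset.filter_subset _ _)
          intro H _ _
          positivity
  have key2 := mgf_subsets hdh b c lam hsum hc
  have h3 : ((P.filter (fun H => s ≤ ∑ x ∈ H, b x)).card : ℝ)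
      ≤ (P.card : ℝ) * Real.exp (lam ^ 2 * h * c ^ 2 / 8) / Real.exp (lam * s) := by
    rw [le_div_iff₀ (Real.exp_pos _)]
    exact key1.trans key2
  refine h3.trans (le_of_eq ?_)
  rw [div_eq_mul_inv, ← Real.exp_neg, mul_assoc, ← Real.exp_add]
  congr 2
  have hh' : (h : ℝ) ≠ 0 := Nat.cast_ne_zero.2 hh.ne'
  rw [hlam]
  field_simp
  ring


set_option maxHeartbeats 2000000 in
lemma leaky_count {d h : ℕ} {Y : Type*} (hdh : d = 2 * h) (hh : 0 < h) (ε β : ℝ)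
    (hε : 0 < ε) (hβ : β ∈ Set.Ioo (0 : ℝ) 1)
    (hd2 : 4 * (Real.exp (2 * ε) - 1) ^ 2 * Real.log (2 / β) < (d : ℝ))
    (R : Fin d → Y → ℝ) (y : Y) (ha0 : ∀ x, 0 ≤ R x y)
    (hpriv : ∀ x x', R x y ≤ Real.exp ε * R x' y) :
    (((Finset.powersetCard h (univ : Finset (Fin d))).filter
        (fun H => leaky R H ((Real.exp (2 * ε) - 1) *
          Real.sqrt (4 / (d : ℝ) * Real.log (2 / β))) y)).card : ℝ)
      ≤ β * ((Finset.powersetCard h (univ : Finset (Fin d))).card : ℝ) := by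
  set C := Real.exp (2 * ε) - 1 with hC
  set L := Real.log (2 / β) with hL
  set v := C * Real.sqrt (4 / (d : ℝ) * L) with hv
  set P := Finset.powersetCard h (univ : Finset (Fin d)) with hP
  have hCpos : 0 < C := by
    rw [hC, sub_pos]
    exact Real.one_lt_exp_iff.2 (by linarith)
  have hLpos : 0 < L := Real.log_pos ((one_lt_div hβ.1).2 (by linarith [hβ.2]))
  have hdpos : (0 : ℝ) < d := lt_trans (by positivity) hd2
  have hd0 : (d : ℝ) ≠ 0 := hdpos.ne'
  have hvpos : 0 < v := by
    rw [hv]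
    have : 0 < 4 / (d : ℝ) * L := by positivity
    positivity
  have hvsq : v ^ 2 = 4 * C ^ 2 * L / d := by
    rw [hv, mul_pow, Real.sq_sqrt (by positivity)]
    ring
  have hv1 : v < 1 := by
    have h1 : v ^ 2 < 1 := by
      rw [hvsq, div_lt_one hdpos]
      linarith
    nlinarith
  set a : Fin d → ℝ := fun x => R x y with ha
  set p : ℝ := (∑ x, a x) / d with hp
  by_cases hp0 : p = 0
  · -- all a x = 0, no leaky H
    have hsa : ∑ x, a x = 0 := by
      have := hp0
      rw [hp, div_eq_zero_iff] at this
      tauto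
    have hall : ∀ x, a x = 0 := by
      intro x
      have := (Finset.sum_eq_zero_iff_of_nonneg (fun x _ => ha0 x)).1 hsa
      exact this x (Finset.mem_univ x)
    have : P.filter (fun H => leaky R H v y) = ∅ := by
      apply Finset.filter_false_of_mem
      intro H _
      rw [leaky, probU, probU]
      have h1 : ∑ x ∈ H, R x y = 0 := Finset.sum_eq_zero (fun x _ => hall x)
      have h2 : ∑ x ∈ (univ : Finset (Fin d)), R x y = 0 :=
        Finset.sum_eq_zero (fun x _ => hall x)
      rw [h1, h2]
      simp
      linarith
    rw [this]
    simp only [Finset.card_empty, Nat.cast_zero]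
    exact mul_nonneg hβ.1.le (Nat.cast_nonneg _)
  · have hsa_nonneg : (0:ℝ) ≤ ∑ x, a x := Finset.sum_nonneg (fun x _ => ha0 x)
    have hppos : 0 < p := by
      rcases lt_or_eq_of_le hsa_nonneg with h1 | h1
      · rw [hp]; positivity
      · exact absurd (by rw [hp, ← h1]; simp) hp0
    set c := C * p with hc'
    set t := p * v / (1 + v) with ht
    set s := (h : ℝ) * t with hs'
    have hcpos : 0 < c := by rw [hc']; positivity
    have htpos : 0 < t := by rw [ht]; positivity
    have hspos : 0 < s := by
      rw [hs']
      have : (0:ℝ) < h := by exact_mod_cast hh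
      positivity
    have htlt : t < p := by
      rw [ht]
      rw [div_lt_iff₀ (by linarith)]
      nlinarith
    -- bound on values
    have hap : ∀ x, a x ≤ Real.exp ε * p := by
      intro x
      have h1 : ∀ x', a x ≤ Real.exp ε * a x' := fun x' => hpriv x x'
      have h2 : (d : ℝ) * a x ≤ Real.exp ε * ∑ x', a x' := by
        calc (d : ℝ) * a x = ∑ _x' : Fin d, a x := by
              rw [Finset.sum_const, Finset.card_univ, Fintype.card_fin, nsmul_eq_mul]
          _ ≤ ∑ x', Real.exp ε * a x' := Finset.sum_le_sum (fun x' _ => h1 x')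
          _ = Real.exp ε * ∑ x', a x' := by rw [Finset.mul_sum]
      have h3 : ∑ x', a x' = d * p := by
        rw [hp]; field_simp
      rw [h3] at h2
      have := mul_le_mul_of_nonneg_left h2 (le_of_lt (inv_pos.2 hdpos))
      calc a x = (d:ℝ)⁻¹ * ((d:ℝ) * a x) := by field_simp
        _ ≤ (d:ℝ)⁻¹ * (Real.exp ε * ((d:ℝ) * p)) := this
        _ = Real.exp ε * p := by field_simp
    have hexp1 : (1:ℝ) ≤ Real.exp ε := by
      rw [← Real.exp_zero]
      exact Real.exp_le_exp.2 hε.le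
    have hee : Real.exp ε * Real.exp ε = Real.exp (2 * ε) := by
      rw [← Real.exp_add]; ring_nf
    have hq1 : (Real.exp ε - 1) * Real.exp ε ≤ C := by
      rw [hC, ← hee]
      nlinarith [hexp1]
    have h6 : (Real.exp ε - 1) * (Real.exp ε * p) ≤ C * p := by
      have := mul_le_mul_of_nonneg_right hq1 hppos.le
      nlinarith [this]
    have hdiff : ∀ x x', |a x - a x'| ≤ c := by
      intro x x'
      rw [abs_le]
      constructor
      · have h1 : a x' ≤ Real.exp ε * a x := hpriv x' x
        have h5 : (Real.exp ε - 1) * a x ≤ (Real.exp ε - 1) * (Real.exp ε * p) := by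
          apply mul_le_mul_of_nonneg_left (hap x) (by linarith)
        rw [hc']
        linarith
      · have h1 : a x ≤ Real.exp ε * a x' := hpriv x x'
        have h5 : (Real.exp ε - 1) * a x' ≤ (Real.exp ε - 1) * (Real.exp ε * p) := by
          apply mul_le_mul_of_nonneg_left (hap x') (by linarith)
        rw [hc']
        linarith
    have hsum1 : ∑ x, (a x - p) = 0 := by
      rw [Finset.sum_sub_distrib, Finset.sum_const, Finset.card_univ, Fintype.card_fin,
        nsmul_eq_mul, hp]
      field_simp
      ring
    have hsum2 : ∑ x, (p - a x) = 0 := by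
      have : ∑ x, (p - a x) = -∑ x, (a x - p) := by
        rw [← Finset.sum_neg_distrib]
        apply Finset.sum_congr rfl
        intro x _
        ring
      rw [this, hsum1, neg_zero]
    -- subset
    have hsubset : P.filter (fun H => leaky R H v y)
        ⊆ (P.filter (fun H => s ≤ ∑ x ∈ H, (a x - p)))
          ∪ (P.filter (fun H => s ≤ ∑ x ∈ H, (p - a x))) := by
      intro H hH
      rw [Finset.mem_filter] at hH
      obtain ⟨hHP, hHl⟩ := hH
      by_contra hcon
      rw [Finset.mem_union, Finset.mem_filter, Finset.mem_filter] at hcon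
      push_neg at hcon
      have h1 : ∑ x ∈ H, (a x - p) < s := hcon.1 hHP
      have h2 : ∑ x ∈ H, (p - a x) < s := hcon.2 hHP
      have hHcard : (H.card : ℝ) = h := by
        have hc2 : H.card = h := (Finset.mem_powersetCard.1 (hP ▸ hHP)).2
        exact_mod_cast hc2
      set q : ℝ := (∑ x ∈ H, a x) / h with hq
      have hSH : ∑ x ∈ H, (a x - p) = ∑ x ∈ H, a x - h * p := by
        rw [Finset.sum_sub_distrib, Finset.sum_const, nsmul_eq_mul, hHcard]
      have hSH2 : ∑ x ∈ H, (p - a x) = h * p - ∑ x ∈ H, a x := by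
        rw [Finset.sum_sub_distrib, Finset.sum_const, nsmul_eq_mul, hHcard]
      have hhpos : (0:ℝ) < h := by exact_mod_cast hh
      have hqp : |q - p| < t := by
        have he : q - p = (∑ x ∈ H, a x - (h:ℝ) * p) / h := by
          rw [hq]; field_simp
        rw [abs_lt, he]
        constructor
        · rw [lt_div_iff₀ hhpos]
          rw [hs', hSH2] at h2
          linarith
        · rw [div_lt_iff₀ hhpos]
          rw [hs', hSH] at h1
          linarith
      -- show not leaky
      have hq0 : 0 < q := by
        have := abs_lt.1 hqp
        linarith
      have hqple : q / p ≤ Real.exp v := by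
        have h3 : q ≤ p + t := by have := abs_lt.1 hqp; linarith
        have h4 : q / p ≤ 1 + v / (1 + v) := by
          rw [div_le_iff₀ hppos]
          have : (1 + v / (1 + v)) * p = p + t := by
            rw [ht]; field_simp
          linarith
        have h5 : 1 + v / (1+v) ≤ 1 + v := by
          have : v / (1+v) ≤ v := by
            rw [div_le_iff₀ (by linarith)]
            nlinarith
          linarith
        have h6 : 1 + v ≤ Real.exp v := by
          have := Real.add_one_le_exp v
          linarith
        linarith
      have hqpge : Real.exp (-v) ≤ q / p := by
        have h3 : p - t ≤ q := by have := abs_lt.1 hqp; linarith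
        have h4 : (1 : ℝ) / (1 + v) ≤ q / p := by
          rw [div_le_div_iff₀ (by linarith) hppos]
          have hpt : (p - t) * (1 + v) = p := by
            rw [ht]; field_simp; ring
          nlinarith [h3, hpt, hvpos]
        have h5 : Real.exp (-v) ≤ 1 / (1 + v) := by
          rw [le_div_iff₀ (by linarith)]
          have h6 : 1 + v ≤ Real.exp v := by
            have := Real.add_one_le_exp v
            linarith
          calc Real.exp (-v) * (1 + v) ≤ Real.exp (-v) * Real.exp v := by
                apply mul_le_mul_of_nonneg_left h6 (Real.exp_pos _).le
            _ = 1 := by rw [← Real.exp_add]; simp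
        linarith
      have : ¬ leaky R H v y := by
        rw [leaky, probU, probU, not_lt]
        have e1 : (∑ x ∈ H, R x y) / (H.card : ℝ) = q := by
          rw [hq, hHcard]
        have e2 : (∑ x ∈ (univ : Finset (Fin d)), R x y) / ((univ : Finset (Fin d)).card : ℝ)
            = p := by
          rw [hp, Finset.card_univ, Fintype.card_fin]
        rw [e1, e2, abs_le]
        have hqp_pos : 0 < q / p := div_pos hq0 hppos
        constructor
        · rw [← Real.log_exp (-v)]
          exact Real.log_le_log (Real.exp_pos _) hqpge
        · rw [← Real.log_exp v]
          exact Real.log_le_log hqp_pos hqple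
      exact this hHl
    -- chernoff bounds
    have hexp_le : Real.exp (-(2 * s ^ 2 / ((h:ℝ) * c ^ 2))) ≤ β / 2 := by
      have hkey : L ≤ 2 * s ^ 2 / ((h:ℝ) * c ^ 2) := by
        have hhpos : (0:ℝ) < h := by exact_mod_cast hh
        have ht2 : p * v / 2 ≤ t := by
          rw [ht]
          apply div_le_div_of_nonneg_left (by positivity) (by linarith) (by linarith)
        have h2 : 2 * s ^ 2 / ((h:ℝ) * c ^ 2) = (d:ℝ) * t ^ 2 / c ^ 2 := by
          rw [hs', hdh]
          push_cast
          field_simp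
        rw [h2]
        have hx2 : (p * v / 2) ^ 2 ≤ t ^ 2 := by
          apply pow_le_pow_left₀ (by positivity) ht2
        have h3 : (d:ℝ) * (p * v / 2) ^ 2 / c ^ 2 ≤ (d:ℝ) * t ^ 2 / c ^ 2 := by
          gcongr
        have h4 : (d:ℝ) * (p * v / 2) ^ 2 / c ^ 2 = L := by
          rw [hc']
          have e1 : (d:ℝ) * (p * v / 2) ^ 2 / (C * p) ^ 2 = (d:ℝ) * v ^ 2 / (4 * C ^ 2) := by
            field_simp
            ring
          rw [e1, hvsq]
          field_simp
        linarith
      calc Real.exp (-(2 * s ^ 2 / ((h:ℝ) * c ^ 2))) ≤ Real.exp (-L) := by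
            apply Real.exp_le_exp.2
            linarith
        _ = β / 2 := by
            have h2b : (0:ℝ) < 2 / β := div_pos two_pos hβ.1
            rw [hL, ← Real.log_inv, Real.exp_log (inv_pos.2 h2b), inv_div]
    have hb1 := chernoff_count hdh hh (fun x => a x - p) c s hsum1
      (fun x x' => by simpa using hdiff x x') hcpos hspos
    have hb2 := chernoff_count hdh hh (fun x => p - a x) c s hsum2
      (fun x x' => by rw [show p - a x - (p - a x') = -(a x - a x') by ring, abs_neg]
                      exact hdiff x x') hcpos hspos
    have hcards : ((P.filter (fun H => leaky R H v y)).card : ℝ)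
        ≤ ((P.filter (fun H => s ≤ ∑ x ∈ H, (a x - p))).card : ℝ)
          + ((P.filter (fun H => s ≤ ∑ x ∈ H, (p - a x))).card : ℝ) := by
      have := Finset.card_le_card hsubset
      have h2 := Finset.card_union_le (P.filter (fun H => s ≤ ∑ x ∈ H, (a x - p)))
        (P.filter (fun H => s ≤ ∑ x ∈ H, (p - a x)))
      exact_mod_cast le_trans this h2
    calc ((P.filter (fun H => leaky R H v y)).card : ℝ)
        ≤ (P.card : ℝ) * Real.exp (-(2 * s ^ 2 / ((h:ℝ) * c ^ 2)))
          + (P.card : ℝ) * Real.exp (-(2 * s ^ 2 / ((h:ℝ) * c ^ 2))) := by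
          refine hcards.trans (add_le_add ?_ ?_) <;> [exact hb1; exact hb2]
      _ ≤ (P.card : ℝ) * (β/2) + (P.card : ℝ) * (β/2) := by
          have hPn : (0:ℝ) ≤ (P.card : ℝ) := Nat.cast_nonneg _
          exact add_le_add (mul_le_mul_of_nonneg_left hexp_le hPn)
            (mul_le_mul_of_nonneg_left hexp_le hPn)
      _ = β * (P.card : ℝ) := by ring


section main
variable {Y : Type*} [Countable Y] {d : ℕ}

lemma probU_nonneg {R : Fin d → Y → ℝ} (hR0 : ∀ x y, 0 ≤ R x y) (S : Finset (Fin d)) (y : Y) :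
    0 ≤ probU R S y := by
  rw [probU]
  apply div_nonneg (Finset.sum_nonneg (fun x _ => hR0 x y)) (Nat.cast_nonneg _)

lemma probLeak_nonneg {R : Fin d → Y → ℝ} (hR0 : ∀ x y, 0 ≤ R x y) (S H : Finset (Fin d))
    (v : ℝ) : 0 ≤ probLeak R S H v := by
  apply tsum_nonneg
  intro y
  by_cases hy : leaky R H v y <;> simp [hy, probU_nonneg hR0]

lemma summable_R {R : Fin d → Y → ℝ} (x : Fin d) (hR1 : ∑' y, R x y = 1) :
    Summable (R x) := by
  by_contra hs
  rw [tsum_eq_zero_of_not_summable hs] at hR1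
  norm_num at hR1

lemma summable_probU {R : Fin d → Y → ℝ} (hR1 : ∀ x, ∑' y, R x y = 1) (S : Finset (Fin d)) :
    Summable (fun y => probU R S y) := by
  apply Summable.div_const
  exact summable_sum (fun x _ => summable_R x (hR1 x))

lemma tsum_probU_univ (hd0 : d ≠ 0) {R : Fin d → Y → ℝ} (hR1 : ∀ x, ∑' y, R x y = 1) :
    ∑' y, probU R univ y = 1 := by
  simp only [probU]
  rw [tsum_div_const, Summable.tsum_finsetSum (fun x (_ : x ∈ univ) => summable_R x (hR1 x))]
  have h1 : ∑ x : Fin d, ∑' y, R x y = (d : ℝ) := by simp [hR1]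
  rw [h1, Finset.card_univ, Fintype.card_fin]
  have : (d:ℝ) ≠ 0 := Nat.cast_ne_zero.2 hd0
  field_simp

lemma expectation_bound {h : ℕ} (hdh : d = 2 * h) (hh : 0 < h) (ε β : ℝ)
    (hε : 0 < ε) (hβ : β ∈ Set.Ioo (0 : ℝ) 1)
    (hd2 : 4 * (Real.exp (2 * ε) - 1) ^ 2 * Real.log (2 / β) < (d : ℝ))
    (R : Fin d → Y → ℝ) (hR0 : ∀ x y, 0 ≤ R x y) (hR1 : ∀ x, ∑' y, R x y = 1)
    (hpriv : ∀ x x' y, R x y ≤ Real.exp ε * R x' y) :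
    ∑ H ∈ Finset.powersetCard h (univ : Finset (Fin d)),
        probLeak R univ H ((Real.exp (2 * ε) - 1) *
          Real.sqrt (4 / (d : ℝ) * Real.log (2 / β)))
      ≤ β * ((Finset.powersetCard h (univ : Finset (Fin d))).card : ℝ) := by
  set v := (Real.exp (2 * ε) - 1) * Real.sqrt (4 / (d : ℝ) * Real.log (2 / β)) with hv
  set P := Finset.powersetCard h (univ : Finset (Fin d)) with hP
  have hd0 : d ≠ 0 := by omega
  have psum : Summable (fun y => probU R univ y) := summable_probU hR1 _
  have pnn : ∀ y, 0 ≤ probU R univ y := probU_nonneg hR0 univ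
  set g : Finset (Fin d) → Y → ℝ :=
    fun H y => if leaky R H v y then probU R univ y else 0 with hg
  have hgs : ∀ H, Summable (g H) := by
    intro H
    apply Summable.of_nonneg_of_le ?_ ?_ psum
    · intro y
      by_cases hy : leaky R H v y <;> simp [hg, hy, pnn]
    · intro y
      by_cases hy : leaky R H v y <;> simp [hg, hy, pnn]
  have hswap : ∑ H ∈ P, probLeak R univ H v = ∑' y, ∑ H ∈ P, g H y := by
    rw [Summable.tsum_finsetSum (fun H _ => hgs H)]
    rfl
  rw [hswap]
  have hinner : ∀ y, ∑ H ∈ P, g H y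
      = ((P.filter (fun H => leaky R H v y)).card : ℝ) * probU R univ y := by
    intro y
    rw [hg]
    simp only
    rw [← Finset.sum_filter, Finset.sum_const, nsmul_eq_mul]
  have hbound : ∀ y, ∑ H ∈ P, g H y ≤ β * (P.card : ℝ) * probU R univ y := by
    intro y
    rw [hinner y]
    apply mul_le_mul_of_nonneg_right _ (pnn y)
    exact leaky_count hdh hh ε β hε hβ hd2 R y (fun x => hR0 x y) (fun x x' => hpriv x x' y)
  calc ∑' y, ∑ H ∈ P, g H y ≤ ∑' y, β * (P.card : ℝ) * probU R univ y := by
        apply Summable.tsum_le_tsum hbound ?_ ?_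
        · apply Summable.of_nonneg_of_le ?_ hbound ((psum.mul_left _))
          intro y
          rw [hinner y]
          exact mul_nonneg (Nat.cast_nonneg _) (pnn y)
        · exact psum.mul_left _
    _ = β * (P.card : ℝ) := by
        rw [tsum_mul_left, tsum_probU_univ hd0 hR1, mul_one]

lemma probLeak_H_le (hd0 : d ≠ 0) {R : Fin d → Y → ℝ} (hR0 : ∀ x y, 0 ≤ R x y)
    (hR1 : ∀ x, ∑' y, R x y = 1) (ε : ℝ)
    (hpriv : ∀ x x' y, R x y ≤ Real.exp ε * R x' y) {H : Finset (Fin d)}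
    (hHc : 0 < H.card) (v : ℝ) :
    probLeak R H H v ≤ Real.exp ε * probLeak R univ H v := by
  have key : ∀ y, probU R H y ≤ Real.exp ε * probU R univ y := by
    intro y
    have hdpos : (0:ℝ) < d := by exact_mod_cast Nat.pos_of_ne_zero hd0
    have hap : ∀ x, R x y ≤ Real.exp ε * probU R univ y := by
      intro x
      have h2 : (d : ℝ) * R x y ≤ Real.exp ε * ∑ x', R x' y := by
        calc (d : ℝ) * R x y = ∑ _x' : Fin d, R x y := by
              rw [Finset.sum_const, Finset.card_univ, Fintype.card_fin, nsmul_eq_mul]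
          _ ≤ ∑ x', Real.exp ε * R x' y := Finset.sum_le_sum (fun x' _ => hpriv x x' y)
          _ = Real.exp ε * ∑ x', R x' y := by rw [Finset.mul_sum]
      rw [probU, Finset.card_univ, Fintype.card_fin, ← mul_div_assoc, le_div_iff₀ hdpos]
      linarith [h2]
    rw [probU, div_le_iff₀ (by exact_mod_cast hHc)]
    calc ∑ x ∈ H, R x y ≤ ∑ _x ∈ H, Real.exp ε * probU R univ y :=
          Finset.sum_le_sum (fun x _ => hap x)
      _ = Real.exp ε * probU R univ y * H.card := by
          rw [Finset.sum_const, nsmul_eq_mul]; ring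
  rw [probLeak, probLeak, ← tsum_mul_left]
  apply Summable.tsum_le_tsum ?_ ?_ ?_
  · intro y
    by_cases hy : leaky R H v y <;> simp [hy, key y]
  · apply Summable.of_nonneg_of_le ?_ ?_ ((summable_probU hR1 univ).mul_left (Real.exp ε))
    · intro y
      by_cases hy : leaky R H v y <;> simp [hy, probU_nonneg hR0]
    · intro y
      by_cases hy : leaky R H v y
      · simpa [hy] using key y
      · simp only [hy, if_false]
        exact mul_nonneg (Real.exp_pos ε).le (probU_nonneg hR0 _ _)
  · apply Summable.mul_left
    apply Summable.of_nonneg_of_le ?_ ?_ (summable_probU hR1 univ)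
    · intro y
      by_cases hy : leaky R H v y <;> simp [hy, probU_nonneg hR0]
    · intro y
      by_cases hy : leaky R H v y <;> simp [hy, probU_nonneg hR0]
end main


/-- for `ε > 0`, `β ∈ (0,1)`, even `d > 4(e^{2ε}-1)² ln(2/β)`, and `n`
`ε`-private randomizers `R_1,…,R_n` from `[d]` to a countable `𝒴`: if `H` is
uniform among size-`d/2` subsets of `[d]`, then with probability at least `5/6`
over `H`, with `v = (e^{2ε}-1)√((4/d) ln(2/β))`, for every `i ∈ [n]` both
`Pr[R_i(U) ∈ Leak(v, H, R_i)] < 6βn` and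
`Pr[R_i(U_H) ∈ Leak(v, H, R_i)] < 6 e^ε βn`. -/
theorem stmt_7 {Y : Type*} [Countable Y] (ε β : ℝ) (n d : ℕ)
    (hε : 0 < ε) (hβ : β ∈ Set.Ioo (0 : ℝ) 1) (hd : Even d)
    (hd2 : 4 * (Real.exp (2 * ε) - 1) ^ 2 * Real.log (2 / β) < (d : ℝ))
    (R : Fin n → Fin d → Y → ℝ)
    (hR0 : ∀ i x y, 0 ≤ R i x y) (hR1 : ∀ i x, ∑' y, R i x y = 1)
    (hpriv : ∀ i x x' y, R i x y ≤ Real.exp ε * R i x' y) :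
    5 / 6 ≤
      (((Finset.powersetCard (d / 2) (Finset.univ : Finset (Fin d))).filter
          (fun H =>
            (∀ i : Fin n,
              probLeak (R i) Finset.univ H
                ((Real.exp (2 * ε) - 1) * Real.sqrt (4 / (d : ℝ) * Real.log (2 / β)))
                < 6 * β * n) ∧
            (∀ i : Fin n,
              probLeak (R i) H H
                ((Real.exp (2 * ε) - 1) * Real.sqrt (4 / (d : ℝ) * Real.log (2 / β)))
                < 6 * Real.exp ε * β * n))).card : ℝ)
        / ((Finset.powersetCard (d / 2) (Finset.univ : Finset (Fin d))).card : ℝ) := by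
  set v := (Real.exp (2 * ε) - 1) * Real.sqrt (4 / (d : ℝ) * Real.log (2 / β)) with hv
  set h := d / 2 with hh'
  set P := Finset.powersetCard h (univ : Finset (Fin d)) with hP
  -- basic positivity
  have hCpos : 0 < Real.exp (2 * ε) - 1 := by
    rw [sub_pos]
    exact Real.one_lt_exp_iff.2 (by linarith)
  have hLpos : 0 < Real.log (2 / β) :=
    Real.log_pos ((one_lt_div hβ.1).2 (by linarith [hβ.2]))
  have hdpos : (0 : ℝ) < d := lt_trans (by positivity) hd2
  have hd0 : d ≠ 0 := (Nat.cast_pos.mp hdpos).ne'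
  have hdh : d = 2 * h := by
    obtain ⟨k, hk⟩ := hd
    omega
  have hh : 0 < h := by omega
  have hNpos : 0 < P.card := by
    rw [hP, Finset.card_powersetCard, Finset.card_univ, Fintype.card_fin]
    exact Nat.choose_pos (by omega)
  have hNR : (0 : ℝ) < P.card := by exact_mod_cast hNpos
  rcases Nat.eq_zero_or_pos n with hn | hn
  · have hfin : ∀ i : Fin n, False := fun i => absurd i.isLt (by omega)
    have heq : P.filter (fun H =>
        (∀ i : Fin n, probLeak (R i) univ H v < 6 * β * n) ∧
        (∀ i : Fin n, probLeak (R i) H H v < 6 * Real.exp ε * β * n)) = P :=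
      Finset.filter_true_of_mem (fun H _ =>
        ⟨fun i => absurd (hfin i) not_false, fun i => absurd (hfin i) not_false⟩)
    rw [heq, div_self hNR.ne']
    norm_num
  · have hnR : (0 : ℝ) < n := by exact_mod_cast hn
    have h6βn : (0 : ℝ) < 6 * β * n := by
      have := hβ.1
      positivity
    -- condition 1 implies condition 2
    have himp : ∀ H ∈ P, (∀ i : Fin n, probLeak (R i) univ H v < 6 * β * n) →
        (∀ i : Fin n, probLeak (R i) H H v < 6 * Real.exp ε * β * n) := by
      intro H hH h1 i
      have hHc : 0 < H.card := by
        rw [(Finset.mem_powersetCard.1 (hP ▸ hH)).2]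
        exact hh
      calc probLeak (R i) H H v ≤ Real.exp ε * probLeak (R i) univ H v :=
            probLeak_H_le hd0 (hR0 i) (hR1 i) ε (hpriv i) hHc v
        _ < Real.exp ε * (6 * β * n) :=
            (mul_lt_mul_iff_right₀ (Real.exp_pos ε)).2 (h1 i)
        _ = 6 * Real.exp ε * β * n := by ring
    have hfeq : P.filter (fun H =>
        (∀ i : Fin n, probLeak (R i) univ H v < 6 * β * n) ∧
        (∀ i : Fin n, probLeak (R i) H H v < 6 * Real.exp ε * β * n))
        = P.filter (fun H => ∀ i : Fin n, probLeak (R i) univ H v < 6 * β * n) := by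
      apply Finset.filter_congr
      intro H hH
      constructor
      · exact fun hp => hp.1
      · exact fun h1 => ⟨h1, himp H hH h1⟩
    rw [hfeq]
    set Bad := P.filter (fun H => ¬ ∀ i : Fin n, probLeak (R i) univ H v < 6 * β * n)
      with hBad
    have hcard_split : (P.filter
          (fun H => ∀ i : Fin n, probLeak (R i) univ H v < 6 * β * n)).card
        + Bad.card = P.card := Finset.card_filter_add_card_filter_not _
    -- Markov
    have hXnn : ∀ H, 0 ≤ ∑ i : Fin n, probLeak (R i) univ H v := by
      intro H
      exact Finset.sum_nonneg (fun i _ => probLeak_nonneg (hR0 i) _ _ _)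
    have hmean : ∑ H ∈ P, ∑ i : Fin n, probLeak (R i) univ H v
        ≤ n * (β * P.card) := by
      rw [Finset.sum_comm]
      calc ∑ i : Fin n, ∑ H ∈ P, probLeak (R i) univ H v
          ≤ ∑ _i : Fin n, β * (P.card : ℝ) := by
            apply Finset.sum_le_sum
            intro i _
            exact expectation_bound hdh hh ε β hε hβ hd2 (R i) (hR0 i) (hR1 i) (hpriv i)
        _ = n * (β * P.card) := by
            rw [Finset.sum_const, Finset.card_univ, Fintype.card_fin, nsmul_eq_mul]
    have hBadX : ∀ H ∈ Bad, 6 * β * n ≤ ∑ i : Fin n, probLeak (R i) univ H v := by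
      intro H hH
      rw [hBad, Finset.mem_filter] at hH
      push_neg at hH
      obtain ⟨i, hi⟩ := hH.2
      calc (6 : ℝ) * β * n ≤ probLeak (R i) univ H v := hi
        _ ≤ ∑ i : Fin n, probLeak (R i) univ H v :=
            Finset.single_le_sum (fun j _ => probLeak_nonneg (hR0 j) _ _ _) (Finset.mem_univ i)
    have hBadCard : (Bad.card : ℝ) ≤ (P.card : ℝ) / 6 := by
      have h1 : 6 * β * n * Bad.card ≤ ∑ H ∈ Bad, ∑ i : Fin n, probLeak (R i) univ H v := by
        calc (6:ℝ) * β * n * Bad.card = ∑ _H ∈ Bad, 6 * β * n := by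
              rw [Finset.sum_const, nsmul_eq_mul]; ring
          _ ≤ ∑ H ∈ Bad, ∑ i : Fin n, probLeak (R i) univ H v :=
              Finset.sum_le_sum hBadX
      have h2 : ∑ H ∈ Bad, ∑ i : Fin n, probLeak (R i) univ H v
          ≤ ∑ H ∈ P, ∑ i : Fin n, probLeak (R i) univ H v := by
        apply Finset.sum_le_sum_of_subset_of_nonneg (Finset.filter_subset _ _)
        exact fun H _ _ => hXnn H
      have h3 : 6 * β * n * Bad.card ≤ n * (β * P.card) := le_trans h1 (le_trans h2 hmean)
      have hβpos := hβ.1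
      nlinarith [hNR, hnR, hβpos]
    -- conclude
    have hGood : ((P.filter
        (fun H => ∀ i : Fin n, probLeak (R i) univ H v < 6 * β * n)).card : ℝ)
        = (P.card : ℝ) - Bad.card := by
      have := hcard_split
      have : ((P.filter (fun H => ∀ i : Fin n, probLeak (R i) univ H v < 6 * β * n)).card
          + Bad.card : ℝ) = P.card := by exact_mod_cast congrArg Nat.cast this
      linarith
    rw [hGood, le_div_iff₀ hNR]
    linarith
end

section
/- Fix ε > 0, δ ∈ (0,1), an even integer d > 4(e^{2ε}−1)²·ln(12·e^ε·n/δ), and n ε-private randomizers R_1,…,R_n from [d] to a countable message set 𝒴. If H is sampled uniformly among subsets of [d] of size d/2, then with probability greater than 2/3 over the choice of H, every randomizer Q_{H,R_i} for i ∈ [n] satisfies (ε', δ)-privacy, where ε' = (e^{2ε}−1)·√((16/d)·ln(24·e^ε·n/δ)). -/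
open Finset


open scoped Classical

/-- `probUSet R S Ys` is `Pr[R(U_S) ∈ Ys]`. -/
noncomputable def probUSet {d : ℕ} {Y : Type*} (R : Fin d → Y → ℝ)
    (S : Finset (Fin d)) (Ys : Set Y) : ℝ :=
  ∑' y : Y, if y ∈ Ys then probU R S y else 0

/-- `QApproxPrivate R H ε' δ` says that the two-input randomizer `Q_{H,R}`, which
on input `+1` samples from `R(U_H)` and on input `-1` samples from `R(U_{H̄})`,
satisfies `(ε',δ)`-privacy: for every event `Ys ⊆ 𝒴`, the probabilities of `Ys`
under its two output distributions are within a factor `e^{ε'}` plus `δ`. -/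
noncomputable def QApproxPrivate {d : ℕ} {Y : Type*} (R : Fin d → Y → ℝ)
    (H : Finset (Fin d)) (ε' δ : ℝ) : Prop :=
  ∀ Ys : Set Y,
    probUSet R H Ys ≤ Real.exp ε' * probUSet R (Finset.univ \ H) Ys + δ ∧
    probUSet R (Finset.univ \ H) Ys ≤ Real.exp ε' * probUSet R H Ys + δ


lemma sum_exp_le_card_mul {ι : Type*} (A : Finset ι) (u : ι → ℝ) (b : ℝ)
    (h0 : ∑ x ∈ A, u x = 0) (hb : ∀ x ∈ A, |u x| ≤ b) :
    ∑ x ∈ A, Real.exp (u x) ≤ A.card * Real.exp (b ^ 2 / 2) := by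
  rcases A.eq_empty_or_nonempty with rfl | hA
  · simp
  have hb0 : 0 ≤ b := le_trans (abs_nonneg _) (hb hA.choose hA.choose_spec)
  rcases eq_or_lt_of_le hb0 with rfl | hbpos
  · have hu : ∀ x ∈ A, u x = 0 := fun x hx => abs_nonpos_iff.mp (hb x hx)
    calc ∑ x ∈ A, Real.exp (u x) = ∑ x ∈ A, 1 := by
          refine Finset.sum_congr rfl fun x hx => ?_
          rw [hu x hx, Real.exp_zero]
      _ = A.card := by simp
      _ ≤ A.card * Real.exp (0 ^ 2 / 2) := by simp
  · have key : ∀ x ∈ A, Real.exp (u x) ≤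
        (b - u x) / (2 * b) * Real.exp (-b) + (b + u x) / (2 * b) * Real.exp b := by
      intro x hx
      have h1 : 0 ≤ (b - u x) / (2 * b) := by
        have h := (abs_le.mp (hb x hx)).2
        have h' : 0 ≤ b - u x := by linarith
        positivity
      have h2 : 0 ≤ (b + u x) / (2 * b) := by
        have h := (abs_le.mp (hb x hx)).1
        have h' : 0 ≤ b + u x := by linarith
        positivity
      have h3 : (b - u x) / (2 * b) + (b + u x) / (2 * b) = 1 := by
        field_simp; ring
      have := convexOn_exp.2 (Set.mem_univ (-b)) (Set.mem_univ b) h1 h2 h3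
      have harg : (b - u x) / (2 * b) * (-b) + (b + u x) / (2 * b) * b = u x := by
        field_simp; ring
      simpa only [smul_eq_mul, harg] using this
    calc ∑ x ∈ A, Real.exp (u x)
        ≤ ∑ x ∈ A, ((b - u x) / (2 * b) * Real.exp (-b) + (b + u x) / (2 * b) * Real.exp b) :=
          Finset.sum_le_sum key
      _ = A.card * Real.cosh b := by
          rw [Finset.sum_add_distrib]
          simp only [div_mul_eq_mul_div, ← Finset.sum_div, Real.cosh_eq]
          rw [show (∑ i ∈ A, (b - u i) * Real.exp (-b)) = (∑ i ∈ A, (b - u i)) * Real.exp (-b) from (Finset.sum_mul _ _ _).symm,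
            show (∑ i ∈ A, (b + u i) * Real.exp b) = (∑ i ∈ A, (b + u i)) * Real.exp b from (Finset.sum_mul _ _ _).symm]
          simp only [Finset.sum_sub_distrib, Finset.sum_add_distrib, h0, Finset.sum_const,
            nsmul_eq_mul]
          field_simp
          ring
      _ ≤ A.card * Real.exp (b ^ 2 / 2) := by
          have := Real.cosh_le_exp_half_sq b
          have hc : (0:ℝ) ≤ A.card := by positivity
          nlinarith [this]

lemma mgf_wor {ι : Type*} [DecidableEq ι] (v : ι → ℝ) (lo hi : ℝ) :
    ∀ (m : ℕ) (A : Finset ι), m ≤ A.card → (∀ x ∈ A, lo ≤ v x ∧ v x ≤ hi) →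
    ∑ H ∈ A.powersetCard m, Real.exp ((∑ x ∈ H, v x) - m * ((∑ x ∈ A, v x) / (A.card : ℝ)))
      ≤ ((A.powersetCard m).card : ℝ) * Real.exp (m * (hi - lo) ^ 2 / 2) := by
  intro m
  induction m with
  | zero =>
    intro A _ _
    simp [Finset.powersetCard_zero]
  | succ m ih =>
    intro A hm hbd
    have hA : A.Nonempty := Finset.card_pos.mp (lt_of_lt_of_le (Nat.succ_pos m) hm)
    set N := A.card with hN
    have hN1 : 1 ≤ N := le_trans (Nat.succ_le_succ (Nat.zero_le m)) hm
    have hNpos : (0:ℝ) < N := by exact_mod_cast Nat.pos_of_ne_zero (by omega)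
    set T : ℝ := ∑ x ∈ A, v x with hT
    set μ : ℝ := T / N with hμ
    set r : ℝ := hi - lo with hr
    have hμlo : lo ≤ μ := by
      rw [hμ, le_div_iff₀ hNpos]
      calc lo * N = ∑ _x ∈ A, lo := by rw [Finset.sum_const, nsmul_eq_mul]; ring
        _ ≤ T := Finset.sum_le_sum fun x hx => (hbd x hx).1
    have hμhi : μ ≤ hi := by
      rw [hμ, div_le_iff₀ hNpos]
      calc T ≤ ∑ _x ∈ A, hi := Finset.sum_le_sum fun x hx => (hbd x hx).2
        _ = hi * N := by rw [Finset.sum_const, nsmul_eq_mul]; ring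
    have hr0 : 0 ≤ r := by
      obtain ⟨x, hx⟩ := hA
      have h1 := (hbd x hx).1
      have h2 := (hbd x hx).2
      rw [hr]; linarith
    set w : ι → ℝ := fun x => v x + m * ((T - v x) / ((N:ℝ) - 1)) - (m + 1) * μ with hw
    have hNμ : (N:ℝ) * μ = T := by rw [hμ]; field_simp
    -- sum of increments is zero
    have hw0 : ∑ x ∈ A, w x = 0 := by
      have e1 : ∑ x ∈ A, w x
          = T + (m:ℝ) * (((N:ℝ) * T - T) / ((N:ℝ) - 1)) - ((m:ℝ) + 1) * ((N:ℝ) * μ) := by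
        simp only [hw]
        rw [Finset.sum_sub_distrib, Finset.sum_add_distrib, ← Finset.mul_sum, ← Finset.sum_div,
          Finset.sum_sub_distrib, Finset.sum_const, nsmul_eq_mul, Finset.sum_const, nsmul_eq_mul,
          ← hT, ← hN]
        ring
      rw [e1, hNμ]
      rcases Nat.eq_zero_or_pos m with hm0 | hm1
      · rw [hm0]; push_cast; ring
      · have hN2 : 2 ≤ N := by omega
        have hne : (N:ℝ) - 1 ≠ 0 := by
          have : (2:ℝ) ≤ N := by exact_mod_cast hN2
          linarith
        have : ((N:ℝ) * T - T) / ((N:ℝ) - 1) = T := by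
          rw [show (N:ℝ) * T - T = T * ((N:ℝ) - 1) by ring, mul_div_cancel_right₀ _ hne]
        rw [this]; ring
    -- increments are bounded
    have hwbd : ∀ x ∈ A, |w x| ≤ r := by
      intro x hx
      rcases Nat.eq_zero_or_pos m with hm0 | hm1
      · have : w x = v x - μ := by rw [hw, hm0]; push_cast; ring
        rw [this, abs_le]
        constructor
        · have := (hbd x hx).1; linarith
        · have := (hbd x hx).2; linarith
      · have hN2 : 2 ≤ N := by omega
        have hne : (0:ℝ) < (N:ℝ) - 1 := by
          have : (2:ℝ) ≤ N := by exact_mod_cast hN2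
          linarith
        have hid : w x = (v x - μ) * (((N:ℝ) - 1 - m) / ((N:ℝ) - 1)) := by
          have hN0 : (N:ℝ) ≠ 0 := ne_of_gt hNpos
          rw [hw, hμ]
          field_simp
          ring
        rw [hid, abs_mul]
        have h1 : |v x - μ| ≤ r := by
          rw [abs_le]
          constructor
          · have := (hbd x hx).1; rw [hr]; linarith
          · have := (hbd x hx).2; rw [hr]; linarith
        have hfr : (0:ℝ) ≤ ((N:ℝ) - 1 - m) / ((N:ℝ) - 1) := by
          apply div_nonneg _ (le_of_lt hne)
          have : (m:ℝ) + 1 ≤ (N:ℝ) := by exact_mod_cast hm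
          linarith
        have hfr1 : ((N:ℝ) - 1 - m) / ((N:ℝ) - 1) ≤ 1 := by
          rw [div_le_one hne]
          have : (0:ℝ) ≤ (m:ℝ) := by positivity
          linarith
        calc |v x - μ| * |((N:ℝ) - 1 - m) / ((N:ℝ) - 1)|
            = |v x - μ| * (((N:ℝ) - 1 - m) / ((N:ℝ) - 1)) := by rw [abs_of_nonneg hfr]
          _ ≤ r * 1 := mul_le_mul h1 hfr1 hfr (by linarith [abs_nonneg (v x - μ)] : (0:ℝ) ≤ r)
          _ = r := mul_one r
    -- double counting identity
    have count : ∀ g : Finset ι → ℝ,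
        ∑ x ∈ A, ∑ H' ∈ (A.erase x).powersetCard m, g (insert x H')
          = ((m:ℝ) + 1) * ∑ H ∈ A.powersetCard (m + 1), g H := by
      intro g
      have stepa : ∀ x ∈ A,
          ∑ H' ∈ (A.erase x).powersetCard m, g (insert x H')
            = ∑ H ∈ (A.powersetCard (m + 1)).filter (fun H => x ∈ H), g H := by
        intro x hx
        refine Finset.sum_bij' (fun H' _ => insert x H') (fun H _ => H.erase x) ?_ ?_ ?_ ?_ ?_
        · intro H' hH'
          obtain ⟨hsub, hcard⟩ := Finset.mem_powersetCard.mp hH'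
          have hxH' : x ∉ H' := fun hcon => (Finset.mem_erase.mp (hsub hcon)).1 rfl
          rw [Finset.mem_filter, Finset.mem_powersetCard]
          refine ⟨⟨?_, ?_⟩, Finset.mem_insert_self x H'⟩
          · intro z hz
            rcases Finset.mem_insert.mp hz with rfl | hz'
            · exact hx
            · exact Finset.mem_of_mem_erase (hsub hz')
          · rw [Finset.card_insert_of_notMem hxH', hcard]
        · intro H hH
          obtain ⟨hHP, hxH⟩ := Finset.mem_filter.mp hH
          obtain ⟨hsub, hcard⟩ := Finset.mem_powersetCard.mp hHP
          rw [Finset.mem_powersetCard]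
          constructor
          · intro z hz
            obtain ⟨hzx, hzH⟩ := Finset.mem_erase.mp hz
            exact Finset.mem_erase.mpr ⟨hzx, hsub hzH⟩
          · rw [Finset.card_erase_of_mem hxH, hcard]
            omega
        · intro H' hH'
          obtain ⟨hsub, _⟩ := Finset.mem_powersetCard.mp hH'
          have hxH' : x ∉ H' := fun hcon => (Finset.mem_erase.mp (hsub hcon)).1 rfl
          exact Finset.erase_insert hxH'
        · intro H hH
          exact Finset.insert_erase (Finset.mem_filter.mp hH).2
        · intro H' hH'
          rfl
      calc ∑ x ∈ A, ∑ H' ∈ (A.erase x).powersetCard m, g (insert x H')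
          = ∑ x ∈ A, ∑ H ∈ (A.powersetCard (m + 1)).filter (fun H => x ∈ H), g H :=
            Finset.sum_congr rfl stepa
        _ = ∑ H ∈ A.powersetCard (m + 1), ∑ _x ∈ H, g H := by
            refine Finset.sum_comm' ?_
            intro x H
            simp only [Finset.mem_filter]
            constructor
            · rintro ⟨hxA, hHP, hxH⟩
              exact ⟨hxH, hHP⟩
            · rintro ⟨hxH, hHP⟩
              exact ⟨(Finset.mem_powersetCard.mp hHP).1 hxH, hHP, hxH⟩
        _ = ∑ H ∈ A.powersetCard (m + 1), ((m:ℝ) + 1) * g H := by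
            refine Finset.sum_congr rfl fun H hH => ?_
            rw [Finset.sum_const, nsmul_eq_mul, (Finset.mem_powersetCard.mp hH).2]
            push_cast
            ring
        _ = ((m:ℝ) + 1) * ∑ H ∈ A.powersetCard (m + 1), g H := by
            rw [Finset.mul_sum]
    -- the factorization of the exponential
    have key : ∀ x ∈ A, ∀ H' ∈ (A.erase x).powersetCard m,
        Real.exp ((∑ z ∈ insert x H', v z) - ((m:ℝ) + 1) * μ)
          = Real.exp (w x) *
            Real.exp ((∑ z ∈ H', v z) - m * ((∑ z ∈ A.erase x, v z) / ((A.erase x).card : ℝ))) := by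
      intro x hx H' hH'
      obtain ⟨hsub, _⟩ := Finset.mem_powersetCard.mp hH'
      have hxH' : x ∉ H' := fun hcon => (Finset.mem_erase.mp (hsub hcon)).1 rfl
      rw [Finset.sum_insert hxH', ← Real.exp_add]
      congr 1
      have hcard : (((A.erase x).card : ℕ) : ℝ) = (N:ℝ) - 1 := by
        rw [Finset.card_erase_of_mem hx, ← hN]
        push_cast [Nat.cast_sub hN1]
        ring
      have hesum : ∑ z ∈ A.erase x, v z = T - v x := by
        rw [hT]
        exact Finset.sum_erase_eq_sub hx
      rw [hcard, hesum, hw]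
      ring
    -- assemble
    set P := A.powersetCard (m + 1) with hP
    set g : Finset ι → ℝ := fun H => Real.exp ((∑ x ∈ H, v x) - ((m:ℝ) + 1) * μ) with hg
    have main : ((m:ℝ) + 1) * ∑ H ∈ P, g H
        ≤ ((m:ℝ) + 1) * (((N.choose (m + 1)) : ℝ) * Real.exp (((m:ℝ) + 1) * r ^ 2 / 2)) := by
      rw [← count g]
      have hCm : ∀ x ∈ A, (((A.erase x).powersetCard m).card : ℝ) = ((N - 1).choose m : ℝ) := by
        intro x hx
        rw [Finset.card_powersetCard, Finset.card_erase_of_mem hx, ← hN]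
      calc ∑ x ∈ A, ∑ H' ∈ (A.erase x).powersetCard m, g (insert x H')
          = ∑ x ∈ A, Real.exp (w x) *
              (∑ H' ∈ (A.erase x).powersetCard m,
                Real.exp ((∑ z ∈ H', v z) - m * ((∑ z ∈ A.erase x, v z) / ((A.erase x).card : ℝ)))) := by
            refine Finset.sum_congr rfl fun x hx => ?_
            rw [Finset.mul_sum]
            exact Finset.sum_congr rfl fun H' hH' => key x hx H' hH'
        _ ≤ ∑ x ∈ A, Real.exp (w x) * (((N - 1).choose m : ℝ) * Real.exp ((m:ℝ) * r ^ 2 / 2)) := by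
            refine Finset.sum_le_sum fun x hx => ?_
            refine mul_le_mul_of_nonneg_left ?_ (Real.exp_nonneg _)
            have hcard' : m ≤ (A.erase x).card := by
              rw [Finset.card_erase_of_mem hx, ← hN]
              omega
            have hbd' : ∀ z ∈ A.erase x, lo ≤ v z ∧ v z ≤ hi :=
              fun z hz => hbd z (Finset.mem_of_mem_erase hz)
            have := ih (A.erase x) hcard' hbd'
            rwa [hCm x hx] at this
        _ = (∑ x ∈ A, Real.exp (w x)) * (((N - 1).choose m : ℝ) * Real.exp ((m:ℝ) * r ^ 2 / 2)) := by
            rw [Finset.sum_mul]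
        _ ≤ ((N:ℝ) * Real.exp (r ^ 2 / 2)) * (((N - 1).choose m : ℝ) * Real.exp ((m:ℝ) * r ^ 2 / 2)) := by
            refine mul_le_mul_of_nonneg_right ?_ (by positivity)
            exact sum_exp_le_card_mul A w r hw0 hwbd
        _ = ((m:ℝ) + 1) * (((N.choose (m + 1)) : ℝ) * Real.exp (((m:ℝ) + 1) * r ^ 2 / 2)) := by
            have hcount : (N:ℕ) * (N - 1).choose m = (m + 1) * N.choose (m + 1) := by
              have h := Nat.add_one_mul_choose_eq (N - 1) m
              rw [Nat.sub_add_cancel hN1] at h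
              rw [h, Nat.mul_comm]
            have hcount' : (N:ℝ) * (((N - 1).choose m : ℕ) : ℝ)
                = ((m:ℝ) + 1) * ((N.choose (m + 1) : ℕ) : ℝ) := by
              exact_mod_cast hcount
            calc (N:ℝ) * Real.exp (r ^ 2 / 2) * ((((N - 1).choose m : ℕ) : ℝ)
                  * Real.exp ((m:ℝ) * r ^ 2 / 2))
                = ((N:ℝ) * (((N - 1).choose m : ℕ) : ℝ)) *
                    (Real.exp (r ^ 2 / 2) * Real.exp ((m:ℝ) * r ^ 2 / 2)) := by ring
              _ = (((m:ℝ) + 1) * ((N.choose (m + 1) : ℕ) : ℝ)) *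
                    Real.exp (r ^ 2 / 2 + (m:ℝ) * r ^ 2 / 2) := by
                  rw [hcount', Real.exp_add]
              _ = ((m:ℝ) + 1) * (((N.choose (m + 1)) : ℝ) *
                    Real.exp (((m:ℝ) + 1) * r ^ 2 / 2)) := by
                  rw [show r ^ 2 / 2 + (m:ℝ) * r ^ 2 / 2 = ((m:ℝ) + 1) * r ^ 2 / 2 by ring]
                  ring
    have hm1pos : (0:ℝ) < (m:ℝ) + 1 := by positivity
    have final : ∑ H ∈ P, g H
        ≤ ((N.choose (m + 1)) : ℝ) * Real.exp (((m:ℝ) + 1) * r ^ 2 / 2) :=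
      le_of_mul_le_mul_left main hm1pos
    have hcardP : ((P.card : ℕ) : ℝ) = ((N.choose (m + 1)) : ℝ) := by
      rw [hP, Finset.card_powersetCard, ← hN]
    calc ∑ H ∈ A.powersetCard (m + 1),
          Real.exp ((∑ x ∈ H, v x) - ((m + 1 : ℕ):ℝ) * ((∑ x ∈ A, v x) / (A.card : ℝ)))
        = ∑ H ∈ P, g H := by
          refine Finset.sum_congr rfl fun H _ => ?_
          rw [hg]
          push_cast
          norm_num
          exact Or.inl rfl
      _ ≤ ((N.choose (m + 1)) : ℝ) * Real.exp (((m:ℝ) + 1) * r ^ 2 / 2) := final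
      _ = ((A.powersetCard (m + 1)).card : ℝ) * Real.exp (((m + 1 : ℕ):ℝ) * (hi - lo) ^ 2 / 2) := by
          rw [← hcardP, hP]
          congr 1
          push_cast
          ring

lemma count_ge {ι : Type*} [DecidableEq ι] (u : ι → ℝ) (lo hi : ℝ) (m : ℕ) (A : Finset ι)
    (hm : m ≤ A.card) (hbd : ∀ x ∈ A, lo ≤ u x ∧ u x ≤ hi) (a : ℝ) :
    (((A.powersetCard m).filter
        (fun H => a ≤ (∑ x ∈ H, u x) - m * ((∑ x ∈ A, u x) / (A.card:ℝ)))).card : ℝ)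
      ≤ Real.exp (m * (hi - lo)^2 / 2 - a) * ((A.powersetCard m).card : ℝ) := by
  classical
  set P := A.powersetCard m with hPdef
  set Q := P.filter (fun H => a ≤ (∑ x ∈ H, u x) - m * ((∑ x ∈ A, u x) / (A.card:ℝ))) with hQdef
  have hmgf := mgf_wor u lo hi m A hm hbd
  have h1 : (Q.card : ℝ) * Real.exp a ≤ (P.card : ℝ) * Real.exp (m * (hi - lo)^2 / 2) := by
    calc (Q.card : ℝ) * Real.exp a = ∑ _H ∈ Q, Real.exp a := by
          rw [Finset.sum_const, nsmul_eq_mul]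
      _ ≤ ∑ H ∈ Q, Real.exp ((∑ x ∈ H, u x) - m * ((∑ x ∈ A, u x) / (A.card:ℝ))) := by
          refine Finset.sum_le_sum fun H hH => ?_
          exact Real.exp_le_exp.mpr (Finset.mem_filter.mp hH).2
      _ ≤ ∑ H ∈ P, Real.exp ((∑ x ∈ H, u x) - m * ((∑ x ∈ A, u x) / (A.card:ℝ))) :=
          Finset.sum_le_sum_of_subset_of_nonneg (Finset.filter_subset _ _)
            (fun H _ _ => Real.exp_nonneg _)
      _ ≤ (P.card : ℝ) * Real.exp (m * (hi - lo)^2 / 2) := hmgf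
  have hea : (0:ℝ) < Real.exp a := Real.exp_pos a
  rw [Real.exp_sub, div_mul_eq_mul_div, le_div_iff₀ hea]
  linarith [h1]

lemma tail_count {ι : Type*} [DecidableEq ι] (v : ι → ℝ) (lo hi : ℝ) (m : ℕ) (A : Finset ι)
    (hm : m ≤ A.card) (hbd : ∀ x ∈ A, lo ≤ v x ∧ v x ≤ hi) (hm0 : 0 < m)
    (hr : 0 < hi - lo) (s : ℝ) (hs : 0 < s) :
    (((A.powersetCard m).filter
        (fun H => s < |(∑ x ∈ H, v x) - m * ((∑ x ∈ A, v x) / (A.card:ℝ))|)).card : ℝ)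
      ≤ 2 * Real.exp (-(s^2) / (2 * m * (hi - lo)^2)) * ((A.powersetCard m).card : ℝ) := by
  classical
  have hmpos : (0:ℝ) < m := by exact_mod_cast hm0
  have hrr : (0:ℝ) < hi - lo := hr
  set t : ℝ := s / (m * (hi - lo)^2) with htdef
  have ht : 0 < t := by positivity
  have ht' : t ≠ 0 := ne_of_gt ht
  have hexparg : (m:ℝ) * (t * (hi - lo))^2 / 2 - t * s = -(s^2) / (2 * m * (hi - lo)^2) := by
    rw [htdef]
    field_simp
    ring
  have hsumH : ∀ H : Finset ι, (∑ x ∈ H, t * v x) = t * ∑ x ∈ H, v x :=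
    fun H => (Finset.mul_sum _ _ _).symm
  have hsumH' : ∀ H : Finset ι, (∑ x ∈ H, -(t * v x)) = -(t * ∑ x ∈ H, v x) := by
    intro H
    rw [Finset.sum_neg_distrib, hsumH]
  -- positive side
  have hpos : (((A.powersetCard m).filter (fun H =>
        s < (∑ x ∈ H, v x) - m * ((∑ x ∈ A, v x) / (A.card:ℝ)))).card : ℝ)
      ≤ Real.exp (-(s^2) / (2 * m * (hi - lo)^2)) * ((A.powersetCard m).card : ℝ) := by
    have happ := count_ge (fun x => t * v x) (t * lo) (t * hi) m A hm
      (fun x hx => ⟨mul_le_mul_of_nonneg_left (hbd x hx).1 (le_of_lt ht),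
        mul_le_mul_of_nonneg_left (hbd x hx).2 (le_of_lt ht)⟩) (t * s)
    have hsub : (A.powersetCard m).filter (fun H =>
          s < (∑ x ∈ H, v x) - m * ((∑ x ∈ A, v x) / (A.card:ℝ)))
        ⊆ (A.powersetCard m).filter (fun H =>
          t * s ≤ (∑ x ∈ H, t * v x) - m * ((∑ x ∈ A, t * v x) / (A.card:ℝ))) := by
      refine Finset.monotone_filter_right _ fun H _ hH => ?_
      rw [hsumH, hsumH, mul_div_assoc t, show (m:ℝ) * (t * ((∑ x ∈ A, v x) / (A.card:ℝ)))
        = t * ((m:ℝ) * ((∑ x ∈ A, v x) / (A.card:ℝ))) from by ring, ← mul_sub]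
      exact mul_le_mul_of_nonneg_left (le_of_lt hH) (le_of_lt ht)
    calc (((A.powersetCard m).filter (fun H =>
          s < (∑ x ∈ H, v x) - m * ((∑ x ∈ A, v x) / (A.card:ℝ)))).card : ℝ)
        ≤ (((A.powersetCard m).filter (fun H =>
          t * s ≤ (∑ x ∈ H, t * v x) - m * ((∑ x ∈ A, t * v x) / (A.card:ℝ)))).card : ℝ) := by
          exact_mod_cast Finset.card_le_card hsub
      _ ≤ Real.exp ((m:ℝ) * (t * hi - t * lo)^2 / 2 - t * s) * ((A.powersetCard m).card : ℝ) :=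
          happ
      _ = Real.exp (-(s^2) / (2 * m * (hi - lo)^2)) * ((A.powersetCard m).card : ℝ) := by
          rw [show t * hi - t * lo = t * (hi - lo) from by ring, hexparg]
  -- negative side
  have hneg : (((A.powersetCard m).filter (fun H =>
        (∑ x ∈ H, v x) - m * ((∑ x ∈ A, v x) / (A.card:ℝ)) < -s)).card : ℝ)
      ≤ Real.exp (-(s^2) / (2 * m * (hi - lo)^2)) * ((A.powersetCard m).card : ℝ) := by
    have happ := count_ge (fun x => -(t * v x)) (-(t * hi)) (-(t * lo)) m A hm
      (fun x hx => ⟨neg_le_neg (mul_le_mul_of_nonneg_left (hbd x hx).2 (le_of_lt ht)),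
        neg_le_neg (mul_le_mul_of_nonneg_left (hbd x hx).1 (le_of_lt ht))⟩) (t * s)
    have hsub : (A.powersetCard m).filter (fun H =>
          (∑ x ∈ H, v x) - m * ((∑ x ∈ A, v x) / (A.card:ℝ)) < -s)
        ⊆ (A.powersetCard m).filter (fun H =>
          t * s ≤ (∑ x ∈ H, -(t * v x)) - m * ((∑ x ∈ A, -(t * v x)) / (A.card:ℝ))) := by
      refine Finset.monotone_filter_right _ fun H _ hH => ?_
      rw [hsumH', hsumH']
      have h2 : (∑ x ∈ H, v x) - m * ((∑ x ∈ A, v x) / (A.card:ℝ)) < -s := hH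
      have h3 := mul_le_mul_of_nonneg_left (le_of_lt h2) (le_of_lt ht)
      calc t * s = t * -(-s) := by ring
        _ ≤ -(t * ((∑ x ∈ H, v x) - m * ((∑ x ∈ A, v x) / (A.card:ℝ)))) := by
            rw [show t * -(-s) = -(t * -s) from by ring]
            exact neg_le_neg h3
        _ = -(t * ∑ x ∈ H, v x) - (m:ℝ) * (-(t * ((∑ x ∈ A, v x))) / (A.card:ℝ)) := by
            field_simp
            ring
        _ = -(t * ∑ x ∈ H, v x) - (m:ℝ) * (-(t * ((∑ x ∈ A, v x) / (A.card:ℝ)))) := by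
            rw [neg_div, mul_div_assoc]
        _ = -(t * ∑ x ∈ H, v x) - (m:ℝ) * (-(t * (∑ x ∈ A, v x)) / (A.card:ℝ)) := by
            rw [neg_div, mul_div_assoc]
    calc (((A.powersetCard m).filter (fun H =>
          (∑ x ∈ H, v x) - m * ((∑ x ∈ A, v x) / (A.card:ℝ)) < -s)).card : ℝ)
        ≤ (((A.powersetCard m).filter (fun H =>
          t * s ≤ (∑ x ∈ H, -(t * v x)) - m * ((∑ x ∈ A, -(t * v x)) / (A.card:ℝ)))).card : ℝ) := by
          exact_mod_cast Finset.card_le_card hsub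
      _ ≤ Real.exp ((m:ℝ) * (-(t * lo) - -(t * hi))^2 / 2 - t * s) * ((A.powersetCard m).card : ℝ) :=
          happ
      _ = Real.exp (-(s^2) / (2 * m * (hi - lo)^2)) * ((A.powersetCard m).card : ℝ) := by
          rw [show -(t * lo) - -(t * hi) = t * (hi - lo) from by ring, hexparg]
  -- combine
  have hunion : (A.powersetCard m).filter (fun H =>
        s < |(∑ x ∈ H, v x) - m * ((∑ x ∈ A, v x) / (A.card:ℝ))|)
      ⊆ ((A.powersetCard m).filter (fun H =>
        s < (∑ x ∈ H, v x) - m * ((∑ x ∈ A, v x) / (A.card:ℝ))))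
      ∪ ((A.powersetCard m).filter (fun H =>
        (∑ x ∈ H, v x) - m * ((∑ x ∈ A, v x) / (A.card:ℝ)) < -s)) := by
    intro H hH
    obtain ⟨hHP, habs⟩ := Finset.mem_filter.mp hH
    rcases lt_or_ge ((∑ x ∈ H, v x) - m * ((∑ x ∈ A, v x) / (A.card:ℝ))) 0 with hneg' | hpos'
    · refine Finset.mem_union_right _ (Finset.mem_filter.mpr ⟨hHP, ?_⟩)
      rw [abs_of_neg hneg'] at habs
      linarith
    · refine Finset.mem_union_left _ (Finset.mem_filter.mpr ⟨hHP, ?_⟩)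
      rwa [abs_of_nonneg hpos'] at habs
  calc (((A.powersetCard m).filter (fun H =>
        s < |(∑ x ∈ H, v x) - m * ((∑ x ∈ A, v x) / (A.card:ℝ))|)).card : ℝ)
      ≤ ((((A.powersetCard m).filter (fun H =>
          s < (∑ x ∈ H, v x) - m * ((∑ x ∈ A, v x) / (A.card:ℝ))))
        ∪ ((A.powersetCard m).filter (fun H =>
          (∑ x ∈ H, v x) - m * ((∑ x ∈ A, v x) / (A.card:ℝ)) < -s))).card : ℝ) := by
        exact_mod_cast Finset.card_le_card hunion
    _ ≤ (((A.powersetCard m).filter (fun H =>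
          s < (∑ x ∈ H, v x) - m * ((∑ x ∈ A, v x) / (A.card:ℝ)))).card : ℝ)
        + (((A.powersetCard m).filter (fun H =>
          (∑ x ∈ H, v x) - m * ((∑ x ∈ A, v x) / (A.card:ℝ)) < -s)).card : ℝ) := by
        exact_mod_cast Finset.card_union_le _ _
    _ ≤ 2 * Real.exp (-(s^2) / (2 * m * (hi - lo)^2)) * ((A.powersetCard m).card : ℝ) := by
        linarith [hpos, hneg]

set_option maxHeartbeats 1600000 in
/-- for `ε > 0`, `δ ∈ (0,1)`, even `d > 4(e^{2ε}-1)² ln(12 e^ε n/δ)`,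
and `n` `ε`-private randomizers `R_1,…,R_n` from `[d]` to a countable `𝒴`: if `H`
is uniform among size-`d/2` subsets of `[d]`, then with probability greater than
`2/3` over `H`, every `Q_{H,R_i}` satisfies `(ε',δ)`-privacy, where
`ε' = (e^{2ε}-1)√((16/d) ln(24 e^ε n/δ))`. -/
theorem stmt_8 {Y : Type*} [Countable Y] (ε δ : ℝ) (n d : ℕ)
    (hε : 0 < ε) (hδ : δ ∈ Set.Ioo (0 : ℝ) 1) (hd : Even d)
    (hd2 : 4 * (Real.exp (2 * ε) - 1) ^ 2 *
        Real.log (12 * Real.exp ε * (n : ℝ) / δ) < (d : ℝ))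
    (R : Fin n → Fin d → Y → ℝ)
    (hR0 : ∀ i x y, 0 ≤ R i x y) (hR1 : ∀ i x, ∑' y, R i x y = 1)
    (hpriv : ∀ i x x' y, R i x y ≤ Real.exp ε * R i x' y) :
    2 / 3 <
      (((Finset.powersetCard (d / 2) (Finset.univ : Finset (Fin d))).filter
          (fun H => ∀ i : Fin n, QApproxPrivate (R i) H
            ((Real.exp (2 * ε) - 1) * Real.sqrt (16 / (d : ℝ) *
              Real.log (24 * Real.exp ε * (n : ℝ) / δ))) δ)).card : ℝ)
        / ((Finset.powersetCard (d / 2) (Finset.univ : Finset (Fin d))).card : ℝ) := by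
  obtain ⟨hδ0, hδ1⟩ := hδ
  set P := Finset.powersetCard (d / 2) (Finset.univ : Finset (Fin d)) with hPdef
  have hPcard : P.card = (d.choose (d / 2)) := by
    rw [hPdef, Finset.card_powersetCard, Finset.card_univ, Fintype.card_fin]
  have hPpos : (0:ℝ) < (P.card : ℝ) := by
    rw [hPcard]
    exact_mod_cast Nat.choose_pos (Nat.div_le_self d 2)
  -- trivial case n = 0
  rcases Nat.eq_zero_or_pos n with hn0 | hn1
  · subst hn0
    have : P.filter (fun H => ∀ i : Fin 0, QApproxPrivate (R i) H
        ((Real.exp (2 * ε) - 1) * Real.sqrt (16 / (d : ℝ) *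
          Real.log (24 * Real.exp ε * ((0:ℕ) : ℝ) / δ))) δ) = P := by
      refine Finset.filter_true_of_mem fun H _ => ?_
      exact fun i => i.elim0
    rw [this, div_self (ne_of_gt hPpos)]
    norm_num
  · -- main case n ≥ 1
    set eε := Real.exp ε with heε
    have he1 : 1 < eε := Real.one_lt_exp_iff.mpr hε
    set E2 := Real.exp (2 * ε) with hE2def
    have hE2 : E2 = eε * eε := by
      rw [hE2def, heε, two_mul, Real.exp_add]
    have hE21 : 1 < E2 := by nlinarith
    have hn1' : (1:ℝ) ≤ (n:ℝ) := by exact_mod_cast hn1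
    set A12 : ℝ := 12 * eε * (n:ℝ) / δ with hA12def
    set A24 : ℝ := 24 * eε * (n:ℝ) / δ with hA24def
    have hA12 : 12 ≤ A12 := by
      rw [hA12def, le_div_iff₀ hδ0]
      nlinarith
    have hA24 : 24 ≤ A24 := by
      rw [hA24def, le_div_iff₀ hδ0]
      nlinarith
    have hA24pos : 0 < A24 := by linarith
    have hA12pos : 0 < A12 := by linarith
    set L12 : ℝ := Real.log A12 with hL12def
    set L : ℝ := Real.log A24 with hLdef
    have hL12two : 2 ≤ L12 := by
      rw [hL12def, Real.le_log_iff_exp_le hA12pos]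
      have h1 : Real.exp 1 < 2.7182818286 := Real.exp_one_lt_d9
      have h2 : Real.exp 2 = Real.exp 1 * Real.exp 1 := by
        rw [← Real.exp_add]; norm_num
      nlinarith [Real.exp_pos 1]
    have hL12pos : 0 < L12 := by linarith
    have hLL12 : L12 ≤ L := by
      rw [hLdef, hL12def]
      exact Real.log_le_log hA12pos (by rw [hA12def, hA24def]; gcongr <;> nlinarith)
    have hLpos : 0 < L := by linarith
    have hLle : L ≤ L12 + 1 := by
      have h224 : A24 = 2 * A12 := by
        rw [hA12def, hA24def]; ring
      rw [hLdef, hL12def, h224, Real.log_mul (by norm_num) (ne_of_gt hA12pos)]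
      have : Real.log 2 ≤ 1 := by
        rw [Real.log_le_iff_le_exp (by norm_num)]
        have := Real.exp_one_gt_d9
        linarith
      linarith
    -- d is positive
    have hd2' : 4 * (E2 - 1) ^ 2 * L12 < (d:ℝ) := hd2
    have hdpos : (0:ℝ) < (d:ℝ) := by nlinarith [sq_nonneg (E2 - 1)]
    have hdnat : 0 < d := by exact_mod_cast hdpos
    obtain ⟨k, hk⟩ : ∃ k, d = 2 * k := by
      obtain ⟨r, hr⟩ := hd
      exact ⟨r, by omega⟩
    have hk1 : 1 ≤ k := by omega
    have hdk : d / 2 = k := by omega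
    have hk2 : 2 * (k:ℝ) = (d:ℝ) := by exact_mod_cast (hk.symm : 2 * k = d)
    have hkpos : (0:ℝ) < (k:ℝ) := by
      have : (1:ℝ) ≤ (k:ℝ) := by exact_mod_cast hk1
      linarith
    -- ε' and β
    set ε' : ℝ := (E2 - 1) * Real.sqrt (16 / (d : ℝ) * L) with hε'def
    have hargpos : 0 < 16 / (d:ℝ) * L := by positivity
    have hε'pos : 0 < ε' := by
      rw [hε'def]
      exact mul_pos (by linarith) (Real.sqrt_pos.mpr hargpos)
    have hε'sq : ε' ^ 2 * (d:ℝ) = 16 * L * (E2 - 1)^2 := by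
      rw [hε'def, mul_pow, Real.sq_sqrt (le_of_lt hargpos)]
      field_simp
    have hε'le : ε' ^ 2 ≤ 8 := by
      nlinarith [hε'sq, hd2', hL12two, hLle, sq_nonneg (E2 - 1), sq_nonneg ε',
        mul_pos hL12pos (mul_pos (sub_pos.mpr hE21) (sub_pos.mpr hE21))]
    set β : ℝ := (Real.exp ε' - 1) / (2 * (Real.exp ε' + 1)) with hβdef
    have he'1 : 1 < Real.exp ε' := Real.one_lt_exp_iff.mpr hε'pos
    have hβpos : 0 < β := by
      rw [hβdef]
      apply div_pos <;> linarith
    have hβhalf : β < 1/2 := by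
      rw [hβdef, div_lt_iff₀ (by linarith : (0:ℝ) < 2 * (Real.exp ε' + 1))]
      linarith
    have hβkey : Real.exp ε' * (1 - 2*β) = 1 + 2*β := by
      rw [hβdef]
      field_simp
      ring
    have hβlow : ε' / 8 ≤ β := by
      have hq : (1 + ε'/2)^2 ≤ Real.exp ε' := by
        have h1 : ε'/2 + 1 ≤ Real.exp (ε'/2) := Real.add_one_le_exp _
        have h2 : Real.exp ε' = Real.exp (ε'/2) * Real.exp (ε'/2) := by
          rw [← Real.exp_add]; ring_nf
        nlinarith [Real.exp_pos (ε'/2)]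
      have hx3 : ε' ≤ 3 := by nlinarith
      rw [hβdef, le_div_iff₀ (by nlinarith)]
      nlinarith [mul_le_mul_of_nonneg_right hq (by linarith : (0:ℝ) ≤ 8 - 2*ε'),
        mul_le_mul_of_nonneg_left hε'le (le_of_lt hε'pos)]
    -- totals
    set T : Fin n → Y → ℝ := fun i y => ∑ x ∈ (Finset.univ : Finset (Fin d)), R i x y with hTdef
    have hT0 : ∀ i y, 0 ≤ T i y := fun i y => Finset.sum_nonneg fun x _ => hR0 i x y
    have hsummR : ∀ i x, Summable (fun y => R i x y) := by
      intro i x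
      by_contra hc
      have h1 := hR1 i x
      rw [tsum_eq_zero_of_not_summable hc] at h1
      norm_num at h1
    have hsummT : ∀ i, Summable (T i) := fun i => summable_sum (fun x _ => hsummR i x)
    have htsumT : ∀ i, ∑' y, T i y = (d:ℝ) := by
      intro i
      rw [hTdef]
      rw [Summable.tsum_finsetSum (fun x _ => hsummR i x)]
      have : ∀ x ∈ (Finset.univ : Finset (Fin d)), ∑' y, R i x y = 1 := fun x _ => hR1 i x
      rw [Finset.sum_congr rfl this, Finset.sum_const, Finset.card_univ, Fintype.card_fin,
        nsmul_eq_mul, mul_one]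
    have hcardu : ((Finset.univ : Finset (Fin d)).card) = d := by
      rw [Finset.card_univ, Fintype.card_fin]
    have hRT : ∀ i x y, R i x y ≤ eε * T i y / (d:ℝ) := by
      intro i x y
      rw [le_div_iff₀ hdpos]
      have h1 : R i x y * (d:ℝ) = ∑ _x' ∈ (Finset.univ : Finset (Fin d)), R i x y := by
        rw [Finset.sum_const, hcardu, nsmul_eq_mul]; ring
      have h2 : ∑ _x' ∈ (Finset.univ : Finset (Fin d)), R i x y
          ≤ ∑ x' ∈ (Finset.univ : Finset (Fin d)), eε * R i x' y :=
        Finset.sum_le_sum fun x' _ => hpriv i x x' y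
      have h3 : ∑ x' ∈ (Finset.univ : Finset (Fin d)), eε * R i x' y = eε * T i y := by
        rw [← Finset.mul_sum]
      linarith only [h1, h2, h3]
    -- the bad event
    set bad : Fin n → Y → Finset (Fin d) → Prop := fun i y H =>
      β * T i y < |(∑ x ∈ H, R i x y) - (k:ℝ) * ((∑ x ∈ (Finset.univ : Finset (Fin d)), R i x y)
        / (((Finset.univ : Finset (Fin d)).card : ℝ)))| with hbaddef
    set P' := Finset.powersetCard k (Finset.univ : Finset (Fin d)) with hP'def
    have hPP' : P = P' := by rw [hPdef, hP'def, hdk]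
    have hbadcount : ∀ i y, ((P'.filter (bad i y)).card : ℝ)
        ≤ 2 * Real.exp (-L) * (P'.card : ℝ) := by
      intro i y
      by_cases hTy : T i y = 0
      · have hall : ∀ x ∈ (Finset.univ : Finset (Fin d)), R i x y = 0 :=
          (Finset.sum_eq_zero_iff_of_nonneg (fun x _ => hR0 i x y)).mp hTy
        have hnone : ∀ H ∈ P', ¬ bad i y H := by
          intro H _
          have hS : ∑ x ∈ H, R i x y = 0 :=
            Finset.sum_eq_zero fun x hx => hall x (Finset.mem_univ x)
          have hSU : ∑ x ∈ (Finset.univ : Finset (Fin d)), R i x y = 0 := hTy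
          simp only [hbaddef, hS, hSU, hTy, mul_zero, zero_div, zero_sub, abs_neg, abs_zero,
            not_lt, sub_zero]
          positivity
        rw [Finset.filter_false_of_mem hnone]
        simp only [Finset.card_empty, Nat.cast_zero]
        positivity
      · have hTpos : 0 < T i y := lt_of_le_of_ne (hT0 i y) (Ne.symm hTy)
        have hne : (Finset.univ : Finset (Fin d)).Nonempty := ⟨⟨0, hdnat⟩, Finset.mem_univ _⟩
        obtain ⟨x₀, _, hx₀⟩ := Finset.exists_min_image (Finset.univ : Finset (Fin d))
          (fun x => R i x y) hne
        obtain ⟨x₁, _, hx₁⟩ := Finset.exists_max_image (Finset.univ : Finset (Fin d))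
          (fun x => R i x y) hne
        set lo := R i x₀ y with hlodef
        set hi := R i x₁ y with hhidef
        have hbd : ∀ x ∈ (Finset.univ : Finset (Fin d)), lo ≤ R i x y ∧ R i x y ≤ hi :=
          fun x hx => ⟨hx₀ x hx, hx₁ x hx⟩
        have hlod : (d:ℝ) * lo ≤ T i y := by
          have : ∑ _x ∈ (Finset.univ : Finset (Fin d)), lo ≤ T i y :=
            Finset.sum_le_sum fun x hx => (hbd x hx).1
          rwa [Finset.sum_const, hcardu, nsmul_eq_mul] at this
        have hhilo : hi ≤ eε * lo := hpriv i x₁ x₀ y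
        by_cases hrz : hi - lo ≤ 0
        · have hxeq : ∀ x ∈ (Finset.univ : Finset (Fin d)), R i x y = lo :=
            fun x hx => le_antisymm (by linarith [(hbd x hx).2]) ((hbd x hx).1)
          have hTval : T i y = (d:ℝ) * lo := by
            rw [hTdef]
            simp only
            rw [Finset.sum_congr rfl hxeq, Finset.sum_const, hcardu, nsmul_eq_mul]
          have hnone : ∀ H ∈ P', ¬ bad i y H := by
            intro H hH hcon
            have hHcard : H.card = k := (Finset.mem_powersetCard.mp hH).2
            have hS : ∑ x ∈ H, R i x y = (k:ℝ) * lo := by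
              rw [Finset.sum_congr rfl (fun x hx => hxeq x (Finset.mem_univ x)),
                Finset.sum_const, hHcard, nsmul_eq_mul]
            have hU : (∑ x ∈ (Finset.univ : Finset (Fin d)), R i x y) = (d:ℝ) * lo := by
              rw [Finset.sum_congr rfl hxeq, Finset.sum_const, hcardu, nsmul_eq_mul]
            have hzero : (∑ x ∈ H, R i x y) - (k:ℝ) * ((∑ x ∈ (Finset.univ : Finset (Fin d)),
                R i x y) / (((Finset.univ : Finset (Fin d)).card : ℝ))) = 0 := by
              rw [hS, hU, hcardu]
              field_simp
              ring
            simp only [hbaddef] at hcon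
            rw [hzero, abs_zero] at hcon
            have : 0 < β * T i y := mul_pos hβpos hTpos
            linarith only [this, hcon]
          rw [Finset.filter_false_of_mem hnone]
          simp only [Finset.card_empty, Nat.cast_zero]
          positivity
        · have hrpos : 0 < hi - lo := not_le.mp hrz
          have hkd' : k ≤ (Finset.univ : Finset (Fin d)).card := by rw [hcardu]; omega
          have happ := tail_count (fun x => R i x y) lo hi k (Finset.univ : Finset (Fin d))
            hkd' hbd (by omega) hrpos (β * T i y) (by positivity)
          refine le_trans happ ?_
          have hdenpos : 0 < 2 * (k:ℝ) * (hi - lo)^2 := by positivity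
          have hexple : -((β * T i y)^2) / (2 * (k:ℝ) * (hi - lo)^2) ≤ -L := by
            rw [neg_div, neg_le_neg_iff, le_div_iff₀ hdenpos]
            have h3' : (d:ℝ) * (hi - lo) ≤ (eε - 1) * T i y := by
              have ha := mul_le_mul_of_nonneg_left hhilo hdpos.le
              have hb := mul_le_mul_of_nonneg_left hlod (by linarith only [he1] : (0:ℝ) ≤ eε - 1)
              nlinarith only [ha, hb]
            have hcore : L * (eε - 1)^2 ≤ β^2 * (d:ℝ) := by
              have hββ : ε'^2/64 ≤ β^2 := by
                have := mul_self_le_mul_self (by positivity : (0:ℝ) ≤ ε'/8) hβlow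
                nlinarith only [this]
              have h5 : (eε - 1)^2 * 4 ≤ (E2 - 1)^2 := by
                have hE2f : E2 - 1 = (eε - 1) * (eε + 1) := by rw [hE2]; ring
                have h41 : 4 ≤ (eε + 1)^2 := by
                  have h42 : 0 ≤ (eε - 1) * (eε + 3) :=
                    mul_nonneg (by linarith only [he1]) (by linarith only [he1])
                  nlinarith only [h42]
                calc (eε - 1)^2 * 4 ≤ (eε - 1)^2 * (eε + 1)^2 :=
                      mul_le_mul_of_nonneg_left h41 (sq_nonneg _)
                  _ = (E2 - 1)^2 := by rw [hE2f]; ring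
              have hc1 := mul_le_mul_of_nonneg_right hββ hdpos.le
              have hc2 := mul_le_mul_of_nonneg_left h5 hLpos.le
              linarith only [hc1, hc2, hε'sq]
            have hTnn : (0:ℝ) ≤ T i y := hT0 i y
            have hsq : ((d:ℝ) * (hi - lo))^2 ≤ ((eε - 1) * T i y)^2 := by
              have h0 : (0:ℝ) ≤ (d:ℝ) * (hi - lo) := by positivity
              exact pow_le_pow_left₀ h0 h3' 2
            have hmain : L * (2 * (k:ℝ) * (hi - lo)^2) * (d:ℝ) ≤ (β * T i y)^2 * (d:ℝ) := by
              calc L * (2 * (k:ℝ) * (hi - lo)^2) * (d:ℝ)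
                  = L * ((d:ℝ) * (hi - lo))^2 := by rw [← hk2]; ring
                _ ≤ L * ((eε - 1) * T i y)^2 := mul_le_mul_of_nonneg_left hsq hLpos.le
                _ = (L * (eε - 1)^2) * (T i y)^2 := by ring
                _ ≤ (β^2 * (d:ℝ)) * (T i y)^2 := mul_le_mul_of_nonneg_right hcore (sq_nonneg _)
                _ = (β * T i y)^2 * (d:ℝ) := by ring
            have hdd := (mul_le_mul_iff_of_pos_right hdpos).mp hmain
            linarith only [hdd]
          have hcc : (0:ℝ) ≤ (P'.card : ℝ) := Nat.cast_nonneg _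
          have hee := Real.exp_le_exp.mpr hexple
          calc 2 * Real.exp (-((β * T i y)^2) / (2 * (k:ℝ) * (hi - lo)^2)) * (P'.card : ℝ)
              ≤ 2 * Real.exp (-L) * (P'.card : ℝ) := by
                have h2e : 2 * Real.exp (-((β * T i y)^2) / (2 * (k:ℝ) * (hi - lo)^2))
                    ≤ 2 * Real.exp (-L) := by linarith only [hee]
                exact mul_le_mul_of_nonneg_right h2e hcc
            _ = 2 * Real.exp (-L) * (P'.card : ℝ) := rfl
    -- the bad mass
    set M : Fin n → Finset (Fin d) → ℝ := fun i H => ∑' y, if bad i y H then T i y else 0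
      with hMdef
    have hMsummand : ∀ i H, Summable (fun y => if bad i y H then T i y else 0) := by
      intro i H
      refine Summable.of_nonneg_of_le (fun y => ?_) (fun y => ?_) (hsummT i)
      · by_cases h : bad i y H <;> simp [h, hT0 i y]
      · by_cases h : bad i y H <;> simp [h, hT0 i y]
    have hM0 : ∀ i H, 0 ≤ M i H := fun i H => tsum_nonneg
      (fun y => by by_cases h : bad i y H <;> simp [h, hT0 i y])
    have hMsum : ∀ i, ∑ H ∈ P', M i H ≤ 2 * Real.exp (-L) * (P'.card:ℝ) * (d:ℝ) := by
      intro i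
      have hswap : ∑ H ∈ P', M i H = ∑' y, ∑ H ∈ P', (if bad i y H then T i y else 0) :=
        (Summable.tsum_finsetSum (fun H _ => hMsummand i H)).symm
      rw [hswap]
      have hle : ∀ y, ∑ H ∈ P', (if bad i y H then T i y else 0)
          ≤ (2 * Real.exp (-L) * (P'.card:ℝ)) * T i y := by
        intro y
        have hinner : ∑ H ∈ P', (if bad i y H then T i y else 0)
            = ((P'.filter (bad i y)).card : ℝ) * T i y := by
          rw [← Finset.sum_filter, Finset.sum_const, nsmul_eq_mul]
        rw [hinner]
        exact mul_le_mul_of_nonneg_right (hbadcount i y) (hT0 i y)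
      have hsumm1 : Summable (fun y => ∑ H ∈ P', (if bad i y H then T i y else 0)) :=
        summable_sum (fun H _ => hMsummand i H)
      have hsumm2 : Summable (fun y => (2 * Real.exp (-L) * (P'.card:ℝ)) * T i y) :=
        (hsummT i).mul_left _
      calc ∑' y, ∑ H ∈ P', (if bad i y H then T i y else 0)
          ≤ ∑' y, (2 * Real.exp (-L) * (P'.card:ℝ)) * T i y := Summable.tsum_le_tsum hle hsumm1 hsumm2
        _ = (2 * Real.exp (-L) * (P'.card:ℝ)) * ∑' y, T i y := tsum_mul_left
        _ = 2 * Real.exp (-L) * (P'.card:ℝ) * (d:ℝ) := by rw [htsumT i]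
    set θ : ℝ := δ * (d:ℝ) / eε with hθdef
    have heεpos : 0 < eε := Real.exp_pos ε
    have hθpos : 0 < θ := by
      rw [hθdef]
      positivity
    have hnR : (0:ℝ) < (n:ℝ) := by linarith only [hn1']
    have hMarkov : ∀ i, ((P'.filter (fun H => θ < M i H)).card : ℝ) * θ ≤ ∑ H ∈ P', M i H := by
      intro i
      calc ((P'.filter (fun H => θ < M i H)).card : ℝ) * θ
          = ∑ _H ∈ P'.filter (fun H => θ < M i H), θ := by
            rw [Finset.sum_const, nsmul_eq_mul]
        _ ≤ ∑ H ∈ P'.filter (fun H => θ < M i H), M i H :=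
            Finset.sum_le_sum (fun H hH => le_of_lt (Finset.mem_filter.mp hH).2)
        _ ≤ ∑ H ∈ P', M i H :=
            Finset.sum_le_sum_of_subset_of_nonneg (Finset.filter_subset _ _)
              (fun H _ _ => hM0 i H)
    have hexpL : Real.exp (-L) = δ / (24 * eε * (n:ℝ)) := by
      rw [hLdef, Real.exp_neg, Real.exp_log hA24pos, hA24def, inv_div]
    have hfrac : ∀ i, ((P'.filter (fun H => θ < M i H)).card : ℝ)
        ≤ (P'.card:ℝ) / (12 * (n:ℝ)) := by
      intro i
      have h1 := le_trans (hMarkov i) (hMsum i)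
      have h2 : 2 * Real.exp (-L) * (P'.card:ℝ) * (d:ℝ) = θ * ((P'.card:ℝ) / (12 * (n:ℝ))) := by
        rw [hexpL, hθdef]
        field_simp
        ring
      rw [h2, mul_comm (((P'.filter (fun H => θ < M i H)).card : ℝ)) θ] at h1
      exact le_of_mul_le_mul_left h1 hθpos
    -- good H satisfy approximate privacy
    have he'pos : (0:ℝ) < Real.exp ε' := Real.exp_pos ε'
    have hgoodpriv : ∀ H, H ∈ P' → (∀ i : Fin n, M i H ≤ θ) →
        ∀ i : Fin n, QApproxPrivate (R i) H ε' δ := by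
      intro H hHP hMH i
      obtain ⟨hHsub, hHcard⟩ := Finset.mem_powersetCard.mp hHP
      have hHcc : ((Finset.univ : Finset (Fin d)) \ H).card = k := by
        rw [Finset.card_sdiff_of_subset hHsub, hcardu, hHcard]
        omega
      have hsdiff : ∀ y, ∑ x ∈ (Finset.univ : Finset (Fin d)) \ H, R i x y
          = T i y - ∑ x ∈ H, R i x y := fun y => Finset.sum_sdiff_eq_sub hHsub
      have hgoody : ∀ y, ¬ bad i y H →
          ((∑ x ∈ H, R i x y) ≤ Real.exp ε' * (T i y - ∑ x ∈ H, R i x y) ∧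
           T i y - (∑ x ∈ H, R i x y) ≤ Real.exp ε' * (∑ x ∈ H, R i x y)) := by
        intro y hb
        simp only [hbaddef, not_lt] at hb
        have hkt : (k:ℝ) * ((∑ x ∈ (Finset.univ : Finset (Fin d)), R i x y)
            / (((Finset.univ : Finset (Fin d)).card : ℝ))) = T i y / 2 := by
          rw [hcardu]
          have hTe : T i y = ∑ x ∈ (Finset.univ : Finset (Fin d)), R i x y := rfl
          rw [hTe]
          field_simp
          linear_combination (∑ x ∈ (Finset.univ : Finset (Fin d)), R i x y) * hk2
        rw [hkt] at hb
        obtain ⟨hb1, hb2⟩ := abs_le.mp hb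
        have hTnn := hT0 i y
        constructor
        · have hc1 : (1/2 - β) * T i y ≤ T i y - (∑ x ∈ H, R i x y) := by
            linarith only [hb2]
          have hc2 := mul_le_mul_of_nonneg_left hc1 (le_of_lt he'pos)
          have hc3 : Real.exp ε' * ((1/2 - β) * T i y) = (1/2 + β) * T i y := by
            linear_combination (T i y / 2) * hβkey
          have hc4 : (∑ x ∈ H, R i x y) ≤ (1/2 + β) * T i y := by linarith only [hb2]
          linarith only [hc2, hc3, hc4]
        · have hc1 : (1/2 - β) * T i y ≤ (∑ x ∈ H, R i x y) := by
            linarith only [hb1]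
          have hc2 := mul_le_mul_of_nonneg_left hc1 (le_of_lt he'pos)
          have hc3 : Real.exp ε' * ((1/2 - β) * T i y) = (1/2 + β) * T i y := by
            linear_combination (T i y / 2) * hβkey
          have hc4 : T i y - (∑ x ∈ H, R i x y) ≤ (1/2 + β) * T i y := by
            linarith only [hb1]
          linarith only [hc2, hc3, hc4]
      -- per-set sums and bounds
      have hprobU : ∀ (V : Finset (Fin d)), V.card = k → ∀ y,
          probU (R i) V y = (∑ x ∈ V, R i x y) / (k:ℝ) := by
        intro V hV y
        rw [probU, hV]
      have hprobU0 : ∀ (V : Finset (Fin d)), ∀ y, 0 ≤ probU (R i) V y := by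
        intro V y
        exact div_nonneg (Finset.sum_nonneg fun x _ => hR0 i x y) (Nat.cast_nonneg _)
      have hprobUle : ∀ (V : Finset (Fin d)), V.card = k → ∀ y,
          probU (R i) V y ≤ (eε / (d:ℝ)) * T i y := by
        intro V hV y
        rw [hprobU V hV, div_le_iff₀ hkpos]
        have h1 : ∑ x ∈ V, R i x y ≤ ∑ _x ∈ V, eε * T i y / (d:ℝ) :=
          Finset.sum_le_sum fun x _ => hRT i x y
        rw [Finset.sum_const, hV, nsmul_eq_mul] at h1
        calc ∑ x ∈ V, R i x y ≤ (k:ℝ) * (eε * T i y / (d:ℝ)) := h1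
          _ = eε / (d:ℝ) * T i y * (k:ℝ) := by ring
      have hsummprobU : ∀ (V : Finset (Fin d)), V.card = k →
          Summable (fun y => probU (R i) V y) := by
        intro V hV
        have h1 : Summable (fun y => (∑ x ∈ V, R i x y) / (k:ℝ)) :=
          Summable.div_const (summable_sum fun x _ => hsummR i x) _
        exact h1.congr (fun y => (hprobU V hV y).symm)
      -- the generic one-sided bound
      have hdir : ∀ (W W' : Finset (Fin d)), W.card = k → W'.card = k →
          (∀ y, ¬ bad i y H → (∑ x ∈ W, R i x y) ≤ Real.exp ε' * (∑ x ∈ W', R i x y)) →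
          ∀ Ys : Set Y, probUSet (R i) W Ys ≤ Real.exp ε' * probUSet (R i) W' Ys + δ := by
        intro W W' hW hW' hcomp Ys
        have hfeq : ∀ y, (if y ∈ Ys then probU (R i) W y else 0)
            = (if y ∈ Ys ∧ ¬ bad i y H then probU (R i) W y else 0)
              + (if y ∈ Ys ∧ bad i y H then probU (R i) W y else 0) := by
          intro y
          by_cases h1 : y ∈ Ys <;> by_cases h2 : bad i y H <;> simp [h1, h2]
        have hsumf1 : Summable (fun y => if y ∈ Ys ∧ ¬ bad i y H then probU (R i) W y else 0) := by
          refine Summable.of_nonneg_of_le (fun y => ?_) (fun y => ?_) (hsummprobU W hW)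
          · by_cases h : y ∈ Ys ∧ ¬ bad i y H <;> simp [h, hprobU0 W y]
          · by_cases h : y ∈ Ys ∧ ¬ bad i y H <;> simp [h, hprobU0 W y]
        have hsumf2 : Summable (fun y => if y ∈ Ys ∧ bad i y H then probU (R i) W y else 0) := by
          refine Summable.of_nonneg_of_le (fun y => ?_) (fun y => ?_) (hsummprobU W hW)
          · by_cases h : y ∈ Ys ∧ bad i y H <;> simp [h, hprobU0 W y]
          · by_cases h : y ∈ Ys ∧ bad i y H <;> simp [h, hprobU0 W y]
        have hsumfW' : Summable (fun y => if y ∈ Ys then probU (R i) W' y else 0) := by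
          refine Summable.of_nonneg_of_le (fun y => ?_) (fun y => ?_) (hsummprobU W' hW')
          · by_cases h : y ∈ Ys <;> simp [h, hprobU0 W' y]
          · by_cases h : y ∈ Ys <;> simp [h, hprobU0 W' y]
        have hpart1 : ∑' y, (if y ∈ Ys ∧ ¬ bad i y H then probU (R i) W y else 0)
            ≤ Real.exp ε' * probUSet (R i) W' Ys := by
          rw [probUSet, ← tsum_mul_left]
          refine Summable.tsum_le_tsum (fun y => ?_) hsumf1 (hsumfW'.mul_left _)
          by_cases h1 : y ∈ Ys
          · by_cases h2 : bad i y H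
            · rw [if_neg (by tauto), if_pos h1]
              exact mul_nonneg (le_of_lt he'pos) (hprobU0 W' y)
            · rw [if_pos ⟨h1, h2⟩, if_pos h1, hprobU W hW y, hprobU W' hW' y, ← mul_div_assoc]
              gcongr
              exact hcomp y h2
          · rw [if_neg (by tauto), if_neg h1, mul_zero]
        have hpart2 : ∑' y, (if y ∈ Ys ∧ bad i y H then probU (R i) W y else 0) ≤ δ := by
          have hpt : ∀ y, (if y ∈ Ys ∧ bad i y H then probU (R i) W y else 0)
              ≤ (eε / (d:ℝ)) * (if bad i y H then T i y else 0) := by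
            intro y
            by_cases h2 : bad i y H
            · by_cases h1 : y ∈ Ys
              · rw [if_pos ⟨h1, h2⟩, if_pos h2]
                exact hprobUle W hW y
              · rw [if_neg (by tauto), if_pos h2]
                exact mul_nonneg (by positivity) (hT0 i y)
            · rw [if_neg (by tauto), if_neg h2, mul_zero]
          have hsR : Summable (fun y => (eε / (d:ℝ)) * (if bad i y H then T i y else 0)) :=
            (hMsummand i H).mul_left _
          calc ∑' y, (if y ∈ Ys ∧ bad i y H then probU (R i) W y else 0)
              ≤ ∑' y, (eε / (d:ℝ)) * (if bad i y H then T i y else 0) :=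
                Summable.tsum_le_tsum hpt hsumf2 hsR
            _ = (eε / (d:ℝ)) * M i H := by rw [tsum_mul_left]
            _ ≤ (eε / (d:ℝ)) * θ := mul_le_mul_of_nonneg_left (hMH i) (by positivity)
            _ = δ := by
                rw [hθdef]
                field_simp
        calc probUSet (R i) W Ys
            = ∑' y, ((if y ∈ Ys ∧ ¬ bad i y H then probU (R i) W y else 0)
              + (if y ∈ Ys ∧ bad i y H then probU (R i) W y else 0)) := by
              rw [probUSet]; exact tsum_congr hfeq
          _ = (∑' y, (if y ∈ Ys ∧ ¬ bad i y H then probU (R i) W y else 0))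
              + ∑' y, (if y ∈ Ys ∧ bad i y H then probU (R i) W y else 0) :=
              Summable.tsum_add hsumf1 hsumf2
          _ ≤ Real.exp ε' * probUSet (R i) W' Ys + δ := add_le_add hpart1 hpart2
      unfold QApproxPrivate
      intro Ys
      constructor
      · exact hdir H ((Finset.univ : Finset (Fin d)) \ H) hHcard hHcc
          (fun y hb => by rw [hsdiff y]; exact (hgoody y hb).1) Ys
      · exact hdir ((Finset.univ : Finset (Fin d)) \ H) H hHcc hHcard
          (fun y hb => by rw [hsdiff y]; exact (hgoody y hb).2) Ys
    -- final counting
    have hsplit : (P'.filter (fun H => ∀ i : Fin n, M i H ≤ θ)).card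
        + (P'.filter (fun H => ¬ ∀ i : Fin n, M i H ≤ θ)).card = P'.card :=
      Finset.card_filter_add_card_filter_not _
    have hBadsub : P'.filter (fun H => ¬ ∀ i : Fin n, M i H ≤ θ)
        ⊆ Finset.univ.biUnion (fun i : Fin n => P'.filter (fun H => θ < M i H)) := by
      intro H hH
      obtain ⟨hHP, hnot⟩ := Finset.mem_filter.mp hH
      push_neg at hnot
      obtain ⟨i, hi⟩ := hnot
      exact Finset.mem_biUnion.mpr ⟨i, Finset.mem_univ i,
        Finset.mem_filter.mpr ⟨hHP, hi⟩⟩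
    have hBadcard : (((P'.filter (fun H => ¬ ∀ i : Fin n, M i H ≤ θ)).card : ℕ) : ℝ)
        ≤ (P'.card : ℝ) / 12 := by
      calc (((P'.filter (fun H => ¬ ∀ i : Fin n, M i H ≤ θ)).card : ℕ) : ℝ)
          ≤ (((Finset.univ.biUnion
              (fun i : Fin n => P'.filter (fun H => θ < M i H))).card : ℕ) : ℝ) := by
            exact_mod_cast Finset.card_le_card hBadsub
        _ ≤ ∑ i : Fin n, (((P'.filter (fun H => θ < M i H)).card : ℕ) : ℝ) := by
            exact_mod_cast Finset.card_biUnion_le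
        _ ≤ ∑ _i : Fin n, (P'.card:ℝ)/(12*(n:ℝ)) := Finset.sum_le_sum (fun i _ => hfrac i)
        _ = (P'.card:ℝ)/12 := by
            rw [Finset.sum_const, Finset.card_univ, Fintype.card_fin, nsmul_eq_mul]
            rw [mul_div_assoc', mul_comm]
            rw [mul_comm 12 (n:ℝ), ← div_div, mul_div_assoc]
            rw [div_self (ne_of_gt hnR), mul_one]
    have hsub2 : P'.filter (fun H => ∀ i : Fin n, M i H ≤ θ)
        ⊆ P.filter (fun H => ∀ i : Fin n, QApproxPrivate (R i) H ε' δ) := by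
      intro H hH
      obtain ⟨hHP, hMH⟩ := Finset.mem_filter.mp hH
      refine Finset.mem_filter.mpr ⟨by rw [hPP']; exact hHP, hgoodpriv H hHP hMH⟩
    have hGc : ((P'.filter (fun H => ∀ i : Fin n, M i H ≤ θ)).card : ℝ)
        ≤ ((P.filter (fun H => ∀ i : Fin n, QApproxPrivate (R i) H ε' δ)).card : ℝ) := by
      exact_mod_cast Finset.card_le_card hsub2
    have hPP'c : (P.card : ℝ) = (P'.card : ℝ) := by rw [hPP']
    have hsplit' : ((P'.filter (fun H => ∀ i : Fin n, M i H ≤ θ)).card : ℝ)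
        + ((P'.filter (fun H => ¬ ∀ i : Fin n, M i H ≤ θ)).card : ℝ) = (P'.card : ℝ) := by
      exact_mod_cast hsplit
    rw [lt_div_iff₀ hPpos]
    have hP'pos : (0:ℝ) < (P'.card : ℝ) := by rwa [hPP'c] at hPpos
    linarith only [hGc, hBadcard, hsplit', hP'pos, hPP'c]
end

section
/- Fix ε > 0, β ∈ (0,1), positive integers d ≤ n with d dividing n, an integer m' ≤ n/d, inputs x'_1,…,x'_{n/d} ∈ {+1,−1}, and a set C ⊆ [n/d] with |C| = m'. For each honest user i ∉ C, let y_i be an independent random variable equal to x'_i · (e^ε+1)/(e^ε−1) with probability e^ε/(e^ε+1) and −x'_i · (e^ε+1)/(e^ε−1) with probability 1/(e^ε+1); for each corrupted user i ∈ C, let y_i be an arbitrary value in {+(e^ε+1)/(e^ε−1), −(e^ε+1)/(e^ε−1)} (chosen adversarially, possibly depending on the honest messages). Then with probability at least 1 − β/d: | (d/n)·Σ_{i=1}^{n/d} y_i − (d/n)·Σ_{i=1}^{n/d} x'_i | < ((e^ε+1)/(e^ε−1)) · ( √((2d/n)·ln(2d/β)) + 2d·m'/n ). -/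
open scoped Classical

/-- The magnitude `(e^ε+1)/(e^ε-1)` of a randomized-response message. -/
noncomputable def rrA (ε : ℝ) : ℝ := (Real.exp ε + 1) / (Real.exp ε - 1)

/-- The probability of the randomized-response coin: `e^ε/(e^ε+1)` for the
truthful outcome and `1/(e^ε+1)` for the flipped outcome. -/
noncomputable def rrProb (ε : ℝ) (b : Bool) : ℝ :=
  if b then Real.exp ε / (Real.exp ε + 1) else 1 / (Real.exp ε + 1)

/-- The honest randomized-response message of user `i` with input `x'_i ∈ {±1}`
and coin `s i`: it equals `x'_i (e^ε+1)/(e^ε-1)` when the coin is truthful and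
`-x'_i (e^ε+1)/(e^ε-1)` otherwise. -/
noncomputable def rrMsg (ε : ℝ) {N : ℕ} (x' : Fin N → ℝ) (s : Fin N → Bool)
    (i : Fin N) : ℝ :=
  (if s i then x' i else -(x' i)) * rrA ε



/-- Hoeffding's lemma for a centered two-point distribution. -/
lemma key_aux (p : ℝ) (hp0 : 0 ≤ p) (hp1 : p ≤ 1) (s : ℝ) :
    (1 - p) * Real.exp (-(s * p)) + p * Real.exp (s * (1 - p)) ≤ Real.exp (s ^ 2 / 8) := by
  set G : ℝ → ℝ := fun t => 1 - p + p * Real.exp t with hGdef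
  have hG : ∀ t, 0 < G t := by
    intro t
    have h1 := Real.exp_pos t
    rcases eq_or_lt_of_le hp0 with h | h
    · simp [hGdef, ← h]
    · have : 0 < p * Real.exp t := mul_pos h h1
      simp only [hGdef]; nlinarith
  set F : ℝ → ℝ := fun t => t ^ 2 / 8 + t * p - Real.log (G t) with hFdef
  set F1 : ℝ → ℝ := fun t => t / 4 + p - p * Real.exp t / G t with hF1def
  have hG' : ∀ t, HasDerivAt G (p * Real.exp t) t := by
    intro t
    exact ((Real.hasDerivAt_exp t).const_mul p).const_add (1 - p)
  have hF : ∀ t, HasDerivAt F (F1 t) t := by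
    intro t
    have h1 : HasDerivAt (fun t : ℝ => t ^ 2 / 8 + t * p) (t / 4 + p) t := by
      have := ((hasDerivAt_pow 2 t).div_const 8).add ((hasDerivAt_id t).mul_const p)
      exact this.congr_deriv (by push_cast; ring)
    have h2 : HasDerivAt (fun t => Real.log (G t)) (p * Real.exp t / G t) t :=
      (hG' t).log (hG t).ne'
    exact h1.sub h2
  have hF1 : ∀ t, HasDerivAt F1
      (1 / 4 - (p * Real.exp t * G t - p * Real.exp t * (p * Real.exp t)) / (G t) ^ 2) t := by
    intro t
    have h2 : HasDerivAt (fun t => p * Real.exp t / G t)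
        ((p * Real.exp t * G t - p * Real.exp t * (p * Real.exp t)) / (G t) ^ 2) t :=
      ((Real.hasDerivAt_exp t).const_mul p).div (hG' t) (hG t).ne'
    have h1 : HasDerivAt (fun t : ℝ => t / 4 + p) (1 / 4) t := by
      simpa using ((hasDerivAt_id t).div_const 4).add_const p
    exact h1.sub h2
  have hF2nonneg : ∀ t,
      0 ≤ 1 / 4 - (p * Real.exp t * G t - p * Real.exp t * (p * Real.exp t)) / (G t) ^ 2 := by
    intro t
    rw [sub_nonneg, div_le_iff₀ (pow_pos (hG t) 2)]
    have h1 := Real.exp_pos t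
    have hGt : G t = 1 - p + p * Real.exp t := rfl
    nlinarith [sq_nonneg ((1 - p) - p * Real.exp t)]
  have hF1mono : Monotone F1 := by
    apply monotone_of_deriv_nonneg
    · exact fun t => (hF1 t).differentiableAt
    · intro t; rw [(hF1 t).deriv]; exact hF2nonneg t
  have hF1zero : F1 0 = 0 := by
    simp [hF1def, hGdef]
  have hFcont : Continuous F := by
    fun_prop (disch := intro x; exact (hG x).ne')
  have hFmono : MonotoneOn F (Set.Ici 0) := by
    apply monotoneOn_of_deriv_nonneg (convex_Ici 0) hFcont.continuousOn
    · intro t _; exact ((hF t).differentiableAt).differentiableWithinAt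
    · intro t ht
      rw [(hF t).deriv]
      rw [interior_Ici] at ht
      calc (0:ℝ) = F1 0 := hF1zero.symm
        _ ≤ F1 t := hF1mono (le_of_lt ht)
  have hFanti : AntitoneOn F (Set.Iic 0) := by
    apply antitoneOn_of_deriv_nonpos (convex_Iic 0) hFcont.continuousOn
    · intro t _; exact ((hF t).differentiableAt).differentiableWithinAt
    · intro t ht
      rw [(hF t).deriv]
      rw [interior_Iic] at ht
      calc F1 t ≤ F1 0 := hF1mono (le_of_lt ht)
        _ = 0 := hF1zero
  have hF0 : F 0 = 0 := by simp [hFdef, hGdef]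
  have hFnonneg : ∀ t, 0 ≤ F t := by
    intro t
    rcases le_or_gt 0 t with h | h
    · calc (0:ℝ) = F 0 := hF0.symm
        _ ≤ F t := hFmono Set.self_mem_Ici h h
    · calc (0:ℝ) = F 0 := hF0.symm
        _ ≤ F t := hFanti h.le Set.self_mem_Iic h.le
  have hlog : Real.log (G s) ≤ s ^ 2 / 8 + s * p := by
    have := hFnonneg s
    simp only [hFdef] at this
    linarith
  calc (1 - p) * Real.exp (-(s * p)) + p * Real.exp (s * (1 - p))
      = Real.exp (-(s * p)) * G s := by
        simp only [hGdef]
        rw [show s * (1 - p) = -(s * p) + s by ring, Real.exp_add]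
        ring
    _ = Real.exp (-(s * p) + Real.log (G s)) := by
        rw [Real.exp_add, Real.exp_log (hG s)]
    _ ≤ Real.exp (s ^ 2 / 8) := by
        apply Real.exp_le_exp.mpr
        linarith


/-- The per-coordinate MGF bound for randomized response. -/
lemma factor_bound (ε l u : ℝ) (hε : 0 < ε) (hu : u = 1 ∨ u = -1) :
    rrProb ε true * Real.exp (l * (u * rrA ε - u)) +
      rrProb ε false * Real.exp (l * (-u * rrA ε - u)) ≤
    Real.exp (l ^ 2 * rrA ε ^ 2 / 2) := by
  have hE1 : 1 < Real.exp ε := by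
    have := Real.add_one_le_exp ε; linarith
  have hE0 : (0:ℝ) < Real.exp ε - 1 := by linarith
  have hE2 : (0:ℝ) < Real.exp ε + 1 := by linarith
  set E := Real.exp ε with hEdef
  have hp0 : 0 ≤ E / (E + 1) := by positivity
  have hp1 : E / (E + 1) ≤ 1 := by
    rw [div_le_one hE2]; linarith
  have hAval : rrA ε = (E + 1) / (E - 1) := rfl
  have hptrue : rrProb ε true = E / (E + 1) := rfl
  have hpfalse : rrProb ε false = 1 - E / (E + 1) := by
    simp only [rrProb, Bool.false_eq_true, if_false, ← hEdef]
    field_simp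
    ring
  have hsq : ∀ s : ℝ, s = 2 * rrA ε * l ∨ s = -(2 * rrA ε * l) →
      s ^ 2 / 8 = l ^ 2 * rrA ε ^ 2 / 2 := by
    rintro s (rfl | rfl) <;> ring
  rcases hu with rfl | rfl
  · have hk := key_aux (E / (E + 1)) hp0 hp1 (2 * rrA ε * l)
    have e1 : l * (1 * rrA ε - 1) = 2 * rrA ε * l * (1 - E / (E + 1)) := by
      rw [hAval]; field_simp; ring
    have e2 : l * (-1 * rrA ε - 1) = -(2 * rrA ε * l * (E / (E + 1))) := by
      rw [hAval]; field_simp; ring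
    rw [hptrue, hpfalse, e1, e2, ← hsq _ (Or.inl rfl)]
    linarith
  · have hk := key_aux (E / (E + 1)) hp0 hp1 (-(2 * rrA ε * l))
    have e1 : l * (-1 * rrA ε - -1) = -(2 * rrA ε * l) * (1 - E / (E + 1)) := by
      rw [hAval]; field_simp; ring
    have e2 : l * (-(-1) * rrA ε - -1) = -(-(2 * rrA ε * l) * (E / (E + 1))) := by
      rw [hAval]; field_simp; ring
    rw [hptrue, hpfalse, e1, e2, ← hsq _ (Or.inr rfl)]
    linarith

/-- Chernoff-type tail bound over the hypercube with product weights. -/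
lemma tail_bound {N : ℕ} (w : Bool → ℝ) (hw : ∀ b, 0 ≤ w b) (g : Fin N → Bool → ℝ)
    (l c B : ℝ) (hl : 0 < l)
    (hfac : ∀ i, w true * Real.exp (l * g i true) + w false * Real.exp (l * g i false)
      ≤ Real.exp B) :
    ∑ s : Fin N → Bool, (if c ≤ ∑ i, g i (s i) then ∏ i, w (s i) else 0)
      ≤ Real.exp (-(l * c) + N * B) := by
  have hfac0 : ∀ i, 0 ≤ w true * Real.exp (l * g i true) + w false * Real.exp (l * g i false) := by
    intro i
    have := Real.exp_pos (l * g i true)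
    have := Real.exp_pos (l * g i false)
    have := hw true
    have := hw false
    positivity
  calc ∑ s : Fin N → Bool, (if c ≤ ∑ i, g i (s i) then ∏ i, w (s i) else 0)
      ≤ ∑ s : Fin N → Bool, Real.exp (-(l * c)) * ∏ i, (w (s i) * Real.exp (l * g i (s i))) := by
        apply Finset.sum_le_sum
        intro s _
        have hprod : ∏ i, (w (s i) * Real.exp (l * g i (s i)))
            = (∏ i, w (s i)) * Real.exp (l * ∑ i, g i (s i)) := by
          rw [Finset.prod_mul_distrib, Finset.mul_sum, Real.exp_sum]
        by_cases h : c ≤ ∑ i, g i (s i)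
        · rw [if_pos h, hprod]
          have h1 : (1:ℝ) ≤ Real.exp (-(l * c)) * Real.exp (l * ∑ i, g i (s i)) := by
            rw [← Real.exp_add]
            apply Real.one_le_exp
            nlinarith
          have h2 : 0 ≤ ∏ i, w (s i) := Finset.prod_nonneg fun i _ => hw (s i)
          nlinarith
        · rw [if_neg h]
          have h2 : 0 ≤ ∏ i, (w (s i) * Real.exp (l * g i (s i))) :=
            Finset.prod_nonneg fun i _ => mul_nonneg (hw (s i)) (Real.exp_pos _).le
          positivity
    _ = Real.exp (-(l * c)) *
        ∏ i, (w true * Real.exp (l * g i true) + w false * Real.exp (l * g i false)) := by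
        rw [← Finset.mul_sum]
        congr 1
        rw [← Fintype.prod_sum (fun i b => w b * Real.exp (l * g i b))]
        apply Finset.prod_congr rfl
        intro i _
        rw [Fintype.sum_bool]
    _ ≤ Real.exp (-(l * c)) * ∏ _i : Fin N, Real.exp B := by
        apply mul_le_mul_of_nonneg_left _ (Real.exp_pos _).le
        exact Finset.prod_le_prod (fun i _ => hfac0 i) (fun i _ => hfac i)
    _ = Real.exp (-(l * c) + N * B) := by
        rw [Finset.prod_const, Finset.card_univ, Fintype.card_fin, ← Real.exp_nat_mul,
          ← Real.exp_add]

set_option maxHeartbeats 1000000 in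
/-- randomized response with `n/d` users, inputs in `{±1}`, a set
`C` of `m'` corrupted users whose messages are arbitrary values in
`{±(e^ε+1)/(e^ε-1)}` chosen adversarially as a function of the honest messages.
With probability at least `1 - β/d`,
`|(d/n) Σ y_i - (d/n) Σ x'_i| < ((e^ε+1)/(e^ε-1)) (√((2d/n) ln(2d/β)) + 2dm'/n)`. -/
theorem stmt_12 (ε β : ℝ) (hε : 0 < ε) (hβ : β ∈ Set.Ioo (0 : ℝ) 1)
    (n d : ℕ) (hd : 0 < d) (hdn : d ≤ n) (hdvd : d ∣ n)
    (m' : ℕ) (hm' : m' ≤ n / d)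
    (x' : Fin (n / d) → ℝ) (hx' : ∀ i, x' i = 1 ∨ x' i = -1)
    (C : Finset (Fin (n / d))) (hC : C.card = m')
    (M : (Fin (n / d) → ℝ) → Fin (n / d) → ℝ)
    (hM : ∀ v i, i ∈ C → M v i = rrA ε ∨ M v i = -(rrA ε)) :
    1 - β / d ≤
      ∑ s : Fin (n / d) → Bool,
        (if
            |((d : ℝ) / n) * (∑ i, (if i ∈ C then
                M (fun i' => if i' ∈ C then 0 else rrMsg ε x' s i') i
              else rrMsg ε x' s i)) -
              ((d : ℝ) / n) * ∑ i, x' i|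
              < rrA ε * (Real.sqrt (2 * d / n * Real.log (2 * d / β)) + 2 * d * m' / n)
          then ∏ i, rrProb ε (s i)
          else 0) := by
  obtain ⟨hβ0, hβ1⟩ := hβ
  have hE1 : 1 < Real.exp ε := by have := Real.add_one_le_exp ε; linarith
  have hA1 : 1 < rrA ε := by
    rw [rrA, lt_div_iff₀ (by linarith)]; linarith
  have hA0 : (0:ℝ) < rrA ε := by linarith
  have hn : 0 < n := lt_of_lt_of_le hd hdn
  have hd' : (0:ℝ) < d := by exact_mod_cast hd
  have hn' : (0:ℝ) < n := by exact_mod_cast hn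
  have hN1 : 1 ≤ n / d := (Nat.one_le_div_iff hd).mpr hdn
  have hN' : (0:ℝ) < ((n / d : ℕ) : ℝ) := by exact_mod_cast hN1
  have hdN : ((n / d : ℕ) : ℝ) * d = n := by exact_mod_cast Nat.div_mul_cancel hdvd
  have hLpos : 0 < Real.log (2 * d / β) := by
    apply Real.log_pos
    rw [lt_div_iff₀ hβ0]
    have hd1 : (1:ℝ) ≤ d := by exact_mod_cast hd
    nlinarith [hd1, hβ0, hβ1]
  set L := Real.log (2 * d / β) with hLdef
  set t := Real.sqrt (2 * d / n * L) with htdef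
  have htarg : (0:ℝ) < 2 * d / n * L := by positivity
  have htpos : 0 < t := Real.sqrt_pos.mpr htarg
  have ht2 : t ^ 2 = 2 * d / n * L := Real.sq_sqrt htarg.le
  set c := rrA ε * t * ((n / d : ℕ) : ℝ) with hcdef
  have hcpos : 0 < c := by positivity
  set l := c / (rrA ε ^ 2 * ((n / d : ℕ) : ℝ)) with hldef
  have hlpos : 0 < l := by positivity
  set B := l ^ 2 * rrA ε ^ 2 / 2 with hBdef
  have hAne : rrA ε ≠ 0 := ne_of_gt hA0
  have hNne : ((n / d : ℕ) : ℝ) ≠ 0 := ne_of_gt hN'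
  have hnne : (n : ℝ) ≠ 0 := ne_of_gt hn'
  -- the exponent identity
  have hexp_id : -(l * c) + ((n / d : ℕ) : ℝ) * B = -L := by
    have h1 : l * c = t ^ 2 * ((n / d : ℕ) : ℝ) := by
      rw [hldef, hcdef]
      field_simp
    have h3 : t ^ 2 * ((n / d : ℕ) : ℝ) = 2 * L := by
      rw [ht2]
      calc 2 * (d:ℝ) / n * L * ((n / d : ℕ) : ℝ)
          = 2 * L * (((n / d : ℕ) : ℝ) * d) / n := by ring
        _ = 2 * L * n / n := by rw [hdN]
        _ = 2 * L := by rw [mul_div_assoc, div_self hnne, mul_one]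
    have h2 : ((n / d : ℕ) : ℝ) * B = t ^ 2 * ((n / d : ℕ) : ℝ) / 2 := by
      rw [hBdef, hldef, hcdef]
      field_simp
    rw [h1, h2, h3]
    linarith
  have hexp_val : Real.exp (-(l * c) + ((n / d : ℕ) : ℝ) * B) = β / (2 * d) := by
    rw [hexp_id, Real.exp_neg, hLdef, Real.exp_log (by positivity), inv_div]
  -- the coordinate increments
  set g : Fin (n / d) → Bool → ℝ :=
    fun i b => if i ∈ C then 0 else ((if b then x' i else -(x' i)) * rrA ε - x' i) with hgdef
  set Z : (Fin (n / d) → Bool) → ℝ := fun s => ∑ i, g i (s i) with hZdef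
  set W : (Fin (n / d) → Bool) → ℝ := fun s => ∏ i, rrProb ε (s i) with hWdef
  have hZs' : ∀ s, Z s = ∑ i, g i (s i) := fun s => rfl
  have hWs' : ∀ s, W s = ∏ i, rrProb ε (s i) := fun s => rfl
  have hgC : ∀ i ∈ C, ∀ b, g i b = 0 := by
    intro i hi b; simp only [hgdef, if_pos hi]
  have hgH : ∀ i, i ∉ C → ∀ b : Bool,
      g i b = (if b then x' i else -(x' i)) * rrA ε - x' i := by
    intro i hi b; simp only [hgdef, if_neg hi]
  clear_value g Z W
  have hprob_nonneg : ∀ b, 0 ≤ rrProb ε b := by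
    intro b
    cases b <;> simp only [rrProb, if_true, if_false, Bool.false_eq_true] <;> positivity
  have hWnn : ∀ s, 0 ≤ W s := by
    intro s
    rw [hWs']
    exact Finset.prod_nonneg fun i _ => hprob_nonneg (s i)
  have hprobsum : rrProb ε true + rrProb ε false = 1 := by
    simp only [rrProb, if_true, if_false, Bool.false_eq_true]
    field_simp
  -- total mass is 1
  have hWsum : ∑ s : Fin (n / d) → Bool, W s = 1 := by
    rw [Finset.sum_congr rfl fun s _ => hWs' s]
    rw [← Fintype.prod_sum (fun (_ : Fin (n / d)) (b : Bool) => rrProb ε b)]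
    rw [Finset.prod_congr rfl fun i _ => (Fintype.sum_bool _).trans hprobsum]
    simp
  -- factor bounds
  have hfac : ∀ i, rrProb ε true * Real.exp (l * g i true) +
      rrProb ε false * Real.exp (l * g i false) ≤ Real.exp B := by
    intro i
    by_cases hi : i ∈ C
    · rw [hgC i hi true, hgC i hi false]
      simp only [mul_zero, Real.exp_zero, mul_one]
      rw [hprobsum]
      exact Real.one_le_exp (by positivity)
    · rw [hgH i hi true, hgH i hi false]
      simp only [if_true, if_false, Bool.false_eq_true]
      have h := factor_bound ε l (x' i) hε (hx' i)
      rw [hBdef]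
      convert h using 4 <;> ring
  have hfacneg : ∀ i, rrProb ε true * Real.exp (l * (-(g i true))) +
      rrProb ε false * Real.exp (l * (-(g i false))) ≤ Real.exp B := by
    intro i
    by_cases hi : i ∈ C
    · rw [hgC i hi true, hgC i hi false]
      simp only [neg_zero, mul_zero, Real.exp_zero, mul_one]
      rw [hprobsum]
      exact Real.one_le_exp (by positivity)
    · rw [hgH i hi true, hgH i hi false]
      simp only [if_true, if_false, Bool.false_eq_true]
      have hu : -(x' i) = 1 ∨ -(x' i) = -1 := by
        rcases hx' i with h | h <;> rw [h] <;> simp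
      have h := factor_bound ε l (-(x' i)) hε hu
      rw [hBdef]
      convert h using 4 <;> ring
  -- the two tails
  have htail1 : ∑ s : Fin (n / d) → Bool, (if c ≤ Z s then W s else 0) ≤ β / (2 * d) := by
    have h := tail_bound (rrProb ε) hprob_nonneg g l c B hlpos hfac
    rw [hexp_val] at h
    calc ∑ s : Fin (n / d) → Bool, (if c ≤ Z s then W s else 0)
        = ∑ s : Fin (n / d) → Bool,
            (if c ≤ ∑ i, g i (s i) then ∏ i, rrProb ε (s i) else 0) := by
          apply Finset.sum_congr rfl
          intro s _
          rw [hZs', hWs']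
      _ ≤ β / (2 * d) := h
  have htail2 : ∑ s : Fin (n / d) → Bool, (if c ≤ -(Z s) then W s else 0) ≤ β / (2 * d) := by
    have h := tail_bound (rrProb ε) hprob_nonneg (fun i b => -(g i b)) l c B hlpos hfacneg
    rw [hexp_val] at h
    calc ∑ s : Fin (n / d) → Bool, (if c ≤ -(Z s) then W s else 0)
        = ∑ s : Fin (n / d) → Bool,
            (if c ≤ ∑ i, -(g i (s i)) then ∏ i, rrProb ε (s i) else 0) := by
          apply Finset.sum_congr rfl
          intro s _
          rw [hZs', hWs', Finset.sum_neg_distrib]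
      _ ≤ β / (2 * d) := h
  -- bad event bound
  have hbad : ∑ s : Fin (n / d) → Bool, (if c ≤ |Z s| then W s else 0) ≤ β / d := by
    have hsplit : ∀ s : Fin (n / d) → Bool, (if c ≤ |Z s| then W s else 0) ≤
        (if c ≤ Z s then W s else 0) + (if c ≤ -(Z s) then W s else 0) := by
      intro s
      have h1 : (0:ℝ) ≤ if c ≤ Z s then W s else 0 := by
        split_ifs; exacts [hWnn s, le_rfl]
      have h2 : (0:ℝ) ≤ if c ≤ -(Z s) then W s else 0 := by
        split_ifs; exacts [hWnn s, le_rfl]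
      by_cases h : c ≤ |Z s|
      · rcases le_total 0 (Z s) with hz | hz
        · have h' : c ≤ Z s := by rwa [abs_of_nonneg hz] at h
          rw [if_pos h, if_pos h']
          linarith
        · have h' : c ≤ -Z s := by rwa [abs_of_nonpos hz] at h
          rw [if_pos h, if_pos h']
          linarith
      · rw [if_neg h]
        linarith
    calc ∑ s : Fin (n / d) → Bool, (if c ≤ |Z s| then W s else 0)
        ≤ ∑ s : Fin (n / d) → Bool,
            ((if c ≤ Z s then W s else 0) + (if c ≤ -(Z s) then W s else 0)) :=
          Finset.sum_le_sum fun s _ => hsplit s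
      _ = (∑ s : Fin (n / d) → Bool, (if c ≤ Z s then W s else 0)) +
          ∑ s : Fin (n / d) → Bool, (if c ≤ -(Z s) then W s else 0) := Finset.sum_add_distrib
      _ ≤ β / (2 * d) + β / (2 * d) := add_le_add htail1 htail2
      _ = β / d := by field_simp; ring
  -- good event implies the statement's event
  have hgood : ∀ s : Fin (n / d) → Bool, |Z s| < c →
      |((d : ℝ) / n) * (∑ i, (if i ∈ C then
          M (fun i' => if i' ∈ C then 0 else rrMsg ε x' s i') i
        else rrMsg ε x' s i)) -
        ((d : ℝ) / n) * ∑ i, x' i|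
        < rrA ε * (t + 2 * d * m' / n) := by
    intro s hZs
    set v : Fin (n / d) → ℝ := fun i' => if i' ∈ C then 0 else rrMsg ε x' s i' with hvdef
    set y : Fin (n / d) → ℝ :=
      fun i => if i ∈ C then M v i else rrMsg ε x' s i with hydef
    have hsum : ∑ i, y i - ∑ i, x' i = (∑ i ∈ C, (M v i - x' i)) + Z s := by
      rw [← Finset.sum_sub_distrib, ← Finset.sum_add_sum_compl C (fun i => y i - x' i)]
      congr 1
      · apply Finset.sum_congr rfl
        intro i hi
        rw [hydef]
        simp only [if_pos hi]
      · rw [hZs' s, ← Finset.sum_add_sum_compl C (fun i => g i (s i))]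
        have h0 : ∑ i ∈ C, g i (s i) = 0 :=
          Finset.sum_eq_zero fun i hi => hgC i hi (s i)
        rw [h0, zero_add]
        apply Finset.sum_congr rfl
        intro i hi
        rw [Finset.mem_compl] at hi
        rw [hgH i hi, hydef]
        simp only [if_neg hi]
        rw [rrMsg]
      -- done
    have hcorr : |∑ i ∈ C, (M v i - x' i)| ≤ (m' : ℝ) * (2 * rrA ε) := by
      calc |∑ i ∈ C, (M v i - x' i)| ≤ ∑ i ∈ C, |M v i - x' i| :=
            Finset.abs_sum_le_sum_abs _ _
        _ ≤ ∑ _i ∈ C, 2 * rrA ε := by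
            apply Finset.sum_le_sum
            intro i hi
            rcases hM v i hi with h1 | h1 <;> rcases hx' i with h2 | h2 <;>
              rw [h1, h2] <;> rw [abs_le] <;> constructor <;> linarith
        _ = (m' : ℝ) * (2 * rrA ε) := by
            rw [Finset.sum_const, hC, nsmul_eq_mul]
    have key : |((d : ℝ) / n) * (∑ i, y i) - ((d : ℝ) / n) * ∑ i, x' i|
        < rrA ε * (t + 2 * d * m' / n) := by
      have heq : ((d : ℝ) / n) * (∑ i, y i) - ((d : ℝ) / n) * ∑ i, x' i
          = ((d : ℝ) / n) * ((∑ i ∈ C, (M v i - x' i)) + Z s) := by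
        rw [← hsum]; ring
      rw [heq, abs_mul, abs_of_nonneg (by positivity : (0:ℝ) ≤ (d : ℝ) / n)]
      have hb1 : |(∑ i ∈ C, (M v i - x' i)) + Z s| < (m' : ℝ) * (2 * rrA ε) + c := by
        calc |(∑ i ∈ C, (M v i - x' i)) + Z s| ≤ |∑ i ∈ C, (M v i - x' i)| + |Z s| :=
              abs_add_le _ _
          _ < (m' : ℝ) * (2 * rrA ε) + c := by linarith
      have hfin : ((d : ℝ) / n) * ((m' : ℝ) * (2 * rrA ε) + c) = rrA ε * (t + 2 * d * m' / n) := by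
        rw [hcdef]
        calc ((d : ℝ) / n) * ((m' : ℝ) * (2 * rrA ε) + rrA ε * t * ((n / d : ℕ) : ℝ))
            = rrA ε * t * ((((n / d : ℕ) : ℝ) * d) / n) + 2 * rrA ε * m' * d / n := by ring
          _ = rrA ε * t * ((n : ℝ) / n) + 2 * rrA ε * m' * d / n := by rw [hdN]
          _ = rrA ε * (t + 2 * d * m' / n) := by rw [div_self hnne]; ring
      calc ((d : ℝ) / n) * |(∑ i ∈ C, (M v i - x' i)) + Z s|
          < ((d : ℝ) / n) * ((m' : ℝ) * (2 * rrA ε) + c) := by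
            apply mul_lt_mul_of_pos_left hb1 (by positivity)
        _ = rrA ε * (t + 2 * d * m' / n) := hfin
    exact key
  -- put everything together
  have hmono : ∑ s : Fin (n / d) → Bool, (if |Z s| < c then W s else 0) ≤
      ∑ s : Fin (n / d) → Bool,
        (if
            |((d : ℝ) / n) * (∑ i, (if i ∈ C then
                M (fun i' => if i' ∈ C then 0 else rrMsg ε x' s i') i
              else rrMsg ε x' s i)) -
              ((d : ℝ) / n) * ∑ i, x' i|
              < rrA ε * (t + 2 * d * m' / n)
          then ∏ i, rrProb ε (s i)
          else 0) := by
    apply Finset.sum_le_sum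
    intro s _
    by_cases h : |Z s| < c
    · rw [if_pos h, if_pos (hgood s h), hWs']
    · rw [if_neg h]
      split_ifs
      exacts [Finset.prod_nonneg fun i _ => hprob_nonneg (s i), le_rfl]
  have hgoodsum : ∑ s : Fin (n / d) → Bool, (if |Z s| < c then W s else 0)
      = 1 - ∑ s : Fin (n / d) → Bool, (if c ≤ |Z s| then W s else 0) := by
    rw [← hWsum, ← Finset.sum_sub_distrib]
    apply Finset.sum_congr rfl
    intro s _
    by_cases h : |Z s| < c
    · rw [if_pos h, if_neg (not_le.mpr h), sub_zero]
    · rw [if_neg h, if_pos (not_lt.mp h), sub_self]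
  calc 1 - β / d ≤ 1 - ∑ s : Fin (n / d) → Bool, (if c ≤ |Z s| then W s else 0) := by
        linarith
    _ = ∑ s : Fin (n / d) → Bool, (if |Z s| < c then W s else 0) := hgoodsum.symm
    _ ≤ _ := hmono
end

section
/- Let d > 2 be an even integer, let α > 0, and let P be a probability distribution on [d] with ‖P − U‖_1 > α·√(10d), where U is the uniform distribution on [d]. If S is a uniformly random subset of [d] of size d/2, then Pr_S[ | 1/2 − P(S) | > α ] > 1/477, where P(S) = Σ_{x∈S} P(x). -/
open scoped Classical
open Finset

/-! ### Auxiliary machinery for STATEMENT 19 -/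

def dl19 {β : Type*} [DecidableEq β] (a b : β) : ℝ := if a = b then 1 else 0

lemma count_sup19 {β : Type*} [Fintype β] [DecidableEq β] (n : ℕ) (T : Finset β) :
    ((Finset.powersetCard n (Finset.univ : Finset β)).filter (fun S => T ⊆ S)).card
      = if T.card ≤ n then (Fintype.card β - T.card).choose (n - T.card) else 0 := by
  split_ifs with h
  · have hcard : (Finset.univ \ T : Finset β).card = Fintype.card β - T.card := by
      rw [Finset.card_sdiff_of_subset (Finset.subset_univ T), Finset.card_univ]
    rw [← hcard, ← Finset.card_powersetCard (n - T.card) (Finset.univ \ T)]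
    apply Finset.card_nbij' (fun S => S \ T) (fun A => A ∪ T)
    · intro S hS
      simp only [Finset.mem_coe, Finset.mem_filter, Finset.mem_powersetCard] at hS ⊢
      obtain ⟨⟨-, hScard⟩, hTS⟩ := hS
      refine ⟨fun x hx => by simp [Finset.mem_sdiff.1 hx |>.2], ?_⟩
      rw [Finset.card_sdiff_of_subset hTS, hScard]
    · intro A hA
      simp only [Finset.mem_coe, Finset.mem_powersetCard] at hA
      obtain ⟨hAsub, hAcard⟩ := hA
      have hdisj : Disjoint A T := by
        refine Finset.disjoint_left.2 fun x hx hxT => ?_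
        exact (Finset.mem_sdiff.1 (hAsub hx)).2 hxT
      simp only [Finset.mem_coe, Finset.mem_filter, Finset.mem_powersetCard]
      refine ⟨⟨Finset.subset_univ _, ?_⟩, Finset.subset_union_right⟩
      rw [Finset.card_union_of_disjoint hdisj, hAcard, Nat.sub_add_cancel h]
    · intro S hS
      simp only [Finset.mem_coe, Finset.mem_filter] at hS
      exact Finset.sdiff_union_of_subset hS.2
    · intro A hA
      simp only [Finset.mem_coe, Finset.mem_powersetCard] at hA
      have hdisj : Disjoint A T := by
        refine Finset.disjoint_left.2 fun x hx hxT => ?_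
        exact (Finset.mem_sdiff.1 (hA.1 hx)).2 hxT
      exact Finset.union_sdiff_cancel_right hdisj
  · rw [Finset.card_eq_zero, Finset.filter_eq_empty_iff]
    intro S hS hTS
    rw [Finset.mem_powersetCard] at hS
    exact h (hS.2 ▸ Finset.card_le_card hTS)

lemma delta_expand19 {β : Type*} [DecidableEq β] (R : ℕ → ℝ) (x y z w : β) :
    R (({x, y, z, w} : Finset β).card)
      = R 4 + (R 3 - R 4) * (dl19 x y + dl19 x z + dl19 x w + dl19 y z + dl19 y w + dl19 z w)
        + (R 2 - 2 * R 3 + R 4) *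
            (dl19 x y * dl19 z w + dl19 x z * dl19 y w + dl19 x w * dl19 y z)
        + (R 2 - 3 * R 3 + 2 * R 4) *
            (dl19 x y * dl19 x z + dl19 x y * dl19 x w + dl19 x z * dl19 x w
              + dl19 y z * dl19 y w)
        + (R 1 - 7 * R 2 + 12 * R 3 - 6 * R 4) * (dl19 x y * dl19 x z * dl19 x w) := by
  by_cases hxy : x = y <;> by_cases hxz : x = z <;> by_cases hxw : x = w <;>
    by_cases hyz : y = z <;> by_cases hyw : y = w <;> by_cases hzw : z = w <;>
    simp_all [dl19, Finset.card_insert_of_notMem, Finset.mem_insert, Finset.mem_singleton,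
      Finset.insert_eq_self] <;>
    ring

lemma pair_expand19 {β : Type*} [DecidableEq β] (R : ℕ → ℝ) (x y : β) :
    R (({x, y} : Finset β).card) = R 2 + (R 1 - R 2) * dl19 x y := by
  by_cases hxy : x = y <;> simp_all [dl19, Finset.card_insert_of_notMem] <;> ring

section Monomials
variable {β : Type*} [Fintype β] [DecidableEq β] (e : β → ℝ)

lemma col19 (f : β → ℝ) (a : β) : (∑ b, f b * dl19 a b) = f a := by
  simp [dl19, mul_ite, Finset.sum_ite_eq]

variable (h1 : ∑ x, e x = 0)
include h1

set_option linter.unusedSectionVars false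

lemma m19_xy : ∑ x, ∑ y, ∑ z, ∑ w, e x * e y * e z * e w * dl19 x y = 0 := by
  have hw : ∀ x y z : β, (∑ w, e x * e y * e z * e w * dl19 x y)
      = e x * e y * e z * dl19 x y * ∑ w, e w := fun x y z => by
    rw [Finset.mul_sum]; exact sum_congr rfl fun w _ => by ring
  simp only [hw, h1, mul_zero, Finset.sum_const_zero]

lemma m19_xz : ∑ x, ∑ y, ∑ z, ∑ w, e x * e y * e z * e w * dl19 x z = 0 := by
  have hw : ∀ x y z : β, (∑ w, e x * e y * e z * e w * dl19 x z)
      = e x * e y * e z * dl19 x z * ∑ w, e w := fun x y z => by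
    rw [Finset.mul_sum]; exact sum_congr rfl fun w _ => by ring
  simp only [hw, h1, mul_zero, Finset.sum_const_zero]

lemma m19_yz : ∑ x, ∑ y, ∑ z, ∑ w, e x * e y * e z * e w * dl19 y z = 0 := by
  have hw : ∀ x y z : β, (∑ w, e x * e y * e z * e w * dl19 y z)
      = e x * e y * e z * dl19 y z * ∑ w, e w := fun x y z => by
    rw [Finset.mul_sum]; exact sum_congr rfl fun w _ => by ring
  simp only [hw, h1, mul_zero, Finset.sum_const_zero]

lemma m19_xw : ∑ x, ∑ y, ∑ z, ∑ w, e x * e y * e z * e w * dl19 x w = 0 := by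
  have hw : ∀ x y z : β, (∑ w, e x * e y * e z * e w * dl19 x w)
      = e x * e y * e z * e x := fun x y z => col19 _ x
  have hz : ∀ x y : β, (∑ z, e x * e y * e z * e x) = e x * e y * e x * ∑ z, e z :=
    fun x y => by rw [Finset.mul_sum]; exact sum_congr rfl fun z _ => by ring
  simp only [hw, hz, h1, mul_zero, Finset.sum_const_zero]

lemma m19_yw : ∑ x, ∑ y, ∑ z, ∑ w, e x * e y * e z * e w * dl19 y w = 0 := by
  have hw : ∀ x y z : β, (∑ w, e x * e y * e z * e w * dl19 y w)
      = e x * e y * e z * e y := fun x y z => col19 _ y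
  have hz : ∀ x y : β, (∑ z, e x * e y * e z * e y) = e x * e y * e y * ∑ z, e z :=
    fun x y => by rw [Finset.mul_sum]; exact sum_congr rfl fun z _ => by ring
  simp only [hw, hz, h1, mul_zero, Finset.sum_const_zero]

lemma m19_zw : ∑ x, ∑ y, ∑ z, ∑ w, e x * e y * e z * e w * dl19 z w = 0 := by
  have hw : ∀ x y z : β, (∑ w, e x * e y * e z * e w * dl19 z w)
      = e x * e y * e z * e z := fun x y z => col19 _ z
  have hz : ∀ x y : β, (∑ z, e x * e y * e z * e z) = e x * e y * ∑ z, e z ^ 2 :=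
    fun x y => by rw [Finset.mul_sum]; exact sum_congr rfl fun z _ => by ring
  have hy : ∀ x : β, (∑ y, e x * e y * ∑ z, e z ^ 2)
      = (e x * ∑ z, e z ^ 2) * ∑ y, e y := fun x => by
    rw [Finset.mul_sum]; exact sum_congr rfl fun y _ => by ring
  simp only [hw, hz, hy, h1, mul_zero, Finset.sum_const_zero]

lemma m19_xy_zw : ∑ x, ∑ y, ∑ z, ∑ w, e x * e y * e z * e w * (dl19 x y * dl19 z w)
    = (∑ x, e x ^ 2) ^ 2 := by
  have hw : ∀ x y z : β, (∑ w, e x * e y * e z * e w * (dl19 x y * dl19 z w))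
      = e x * e y * e z * e z * dl19 x y := fun x y z => by
    rw [← col19 (fun w => e x * e y * e z * e w * dl19 x y) z]
    exact sum_congr rfl fun w _ => by ring
  have hz : ∀ x y : β, (∑ z, e x * e y * e z * e z * dl19 x y)
      = e x * e y * dl19 x y * ∑ z, e z ^ 2 := fun x y => by
    rw [Finset.mul_sum]; exact sum_congr rfl fun z _ => by ring
  have hy : ∀ x : β, (∑ y, e x * e y * dl19 x y * ∑ z, e z ^ 2)
      = e x * e x * ∑ z, e z ^ 2 := fun x => by
    rw [← col19 (fun y => e x * e y * ∑ z, e z ^ 2) x]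
    exact sum_congr rfl fun y _ => by ring
  have hx : (∑ x, e x * e x * ∑ z, e z ^ 2) = (∑ x, e x ^ 2) * ∑ z, e z ^ 2 := by
    rw [Finset.sum_mul]; exact sum_congr rfl fun x _ => by ring
  rw [show ((∑ x, e x ^ 2) ^ 2 = (∑ x, e x ^ 2) * ∑ z, e z ^ 2) by ring]
  simp only [hw, hz, hy, hx]

lemma m19_xz_yw : ∑ x, ∑ y, ∑ z, ∑ w, e x * e y * e z * e w * (dl19 x z * dl19 y w)
    = (∑ x, e x ^ 2) ^ 2 := by
  have hw : ∀ x y z : β, (∑ w, e x * e y * e z * e w * (dl19 x z * dl19 y w))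
      = e x * e y * e z * e y * dl19 x z := fun x y z => by
    rw [← col19 (fun w => e x * e y * e z * e w * dl19 x z) y]
    exact sum_congr rfl fun w _ => by ring
  have hz : ∀ x y : β, (∑ z, e x * e y * e z * e y * dl19 x z)
      = e x * e y * e x * e y := fun x y => by
    rw [← col19 (fun z => e x * e y * e z * e y) x]
  have hy : ∀ x : β, (∑ y, e x * e y * e x * e y) = e x * e x * ∑ y, e y ^ 2 :=
    fun x => by rw [Finset.mul_sum]; exact sum_congr rfl fun y _ => by ring
  have hx : (∑ x, e x * e x * ∑ y, e y ^ 2) = (∑ x, e x ^ 2) * ∑ y, e y ^ 2 := by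
    rw [Finset.sum_mul]; exact sum_congr rfl fun x _ => by ring
  rw [show ((∑ x, e x ^ 2) ^ 2 = (∑ x, e x ^ 2) * ∑ y, e y ^ 2) by ring]
  simp only [hw, hz, hy, hx]

lemma m19_xw_yz : ∑ x, ∑ y, ∑ z, ∑ w, e x * e y * e z * e w * (dl19 x w * dl19 y z)
    = (∑ x, e x ^ 2) ^ 2 := by
  have hw : ∀ x y z : β, (∑ w, e x * e y * e z * e w * (dl19 x w * dl19 y z))
      = e x * e y * e z * e x * dl19 y z := fun x y z => by
    rw [← col19 (fun w => e x * e y * e z * e w * dl19 y z) x]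
    exact sum_congr rfl fun w _ => by ring
  have hz : ∀ x y : β, (∑ z, e x * e y * e z * e x * dl19 y z)
      = e x * e y * e y * e x := fun x y => by
    rw [← col19 (fun z => e x * e y * e z * e x) y]
  have hy : ∀ x : β, (∑ y, e x * e y * e y * e x) = e x * e x * ∑ y, e y ^ 2 :=
    fun x => by rw [Finset.mul_sum]; exact sum_congr rfl fun y _ => by ring
  have hx : (∑ x, e x * e x * ∑ y, e y ^ 2) = (∑ x, e x ^ 2) * ∑ y, e y ^ 2 := by
    rw [Finset.sum_mul]; exact sum_congr rfl fun x _ => by ring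
  rw [show ((∑ x, e x ^ 2) ^ 2 = (∑ x, e x ^ 2) * ∑ y, e y ^ 2) by ring]
  simp only [hw, hz, hy, hx]

lemma m19_t1 : ∑ x, ∑ y, ∑ z, ∑ w, e x * e y * e z * e w * (dl19 x y * dl19 x z) = 0 := by
  have hw : ∀ x y z : β, (∑ w, e x * e y * e z * e w * (dl19 x y * dl19 x z))
      = e x * e y * e z * (dl19 x y * dl19 x z) * ∑ w, e w := fun x y z => by
    rw [Finset.mul_sum]; exact sum_congr rfl fun w _ => by ring
  simp only [hw, h1, mul_zero, Finset.sum_const_zero]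

lemma m19_t2 : ∑ x, ∑ y, ∑ z, ∑ w, e x * e y * e z * e w * (dl19 x y * dl19 x w) = 0 := by
  have hw : ∀ x y z : β, (∑ w, e x * e y * e z * e w * (dl19 x y * dl19 x w))
      = e x * e y * e z * e x * dl19 x y := fun x y z => by
    rw [← col19 (fun w => e x * e y * e z * e w * dl19 x y) x]
    exact sum_congr rfl fun w _ => by ring
  have hz : ∀ x y : β, (∑ z, e x * e y * e z * e x * dl19 x y)
      = e x * e y * e x * dl19 x y * ∑ z, e z := fun x y => by
    rw [Finset.mul_sum]; exact sum_congr rfl fun z _ => by ring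
  simp only [hw, hz, h1, mul_zero, Finset.sum_const_zero]

lemma m19_t3 : ∑ x, ∑ y, ∑ z, ∑ w, e x * e y * e z * e w * (dl19 x z * dl19 x w) = 0 := by
  have hw : ∀ x y z : β, (∑ w, e x * e y * e z * e w * (dl19 x z * dl19 x w))
      = e x * e y * e z * e x * dl19 x z := fun x y z => by
    rw [← col19 (fun w => e x * e y * e z * e w * dl19 x z) x]
    exact sum_congr rfl fun w _ => by ring
  have hz : ∀ x y : β, (∑ z, e x * e y * e z * e x * dl19 x z)
      = e x * e y * e x * e x := fun x y => by
    rw [← col19 (fun z => e x * e y * e z * e x) x]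
  have hy : ∀ x : β, (∑ y, e x * e y * e x * e x)
      = e x * e x * e x * ∑ y, e y := fun x => by
    rw [Finset.mul_sum]; exact sum_congr rfl fun y _ => by ring
  simp only [hw, hz, hy, h1, mul_zero, Finset.sum_const_zero]

lemma m19_t4 : ∑ x, ∑ y, ∑ z, ∑ w, e x * e y * e z * e w * (dl19 y z * dl19 y w) = 0 := by
  have hw : ∀ x y z : β, (∑ w, e x * e y * e z * e w * (dl19 y z * dl19 y w))
      = e x * e y * e z * e y * dl19 y z := fun x y z => by
    rw [← col19 (fun w => e x * e y * e z * e w * dl19 y z) y]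
    exact sum_congr rfl fun w _ => by ring
  have hz : ∀ x y : β, (∑ z, e x * e y * e z * e y * dl19 y z)
      = e x * e y * e y * e y := fun x y => by
    rw [← col19 (fun z => e x * e y * e z * e y) y]
  have hy : ∀ x : β, (∑ y, e x * e y * e y * e y) = e x * ∑ y, e y ^ 3 :=
    fun x => by rw [Finset.mul_sum]; exact sum_congr rfl fun y _ => by ring
  have hx : (∑ x, e x * ∑ y, e y ^ 3) = (∑ x, e x) * ∑ y, e y ^ 3 := by
    rw [Finset.sum_mul]
  simp only [hw, hz, hy, hx, h1, zero_mul]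

lemma m19_quad : ∑ x, ∑ y, ∑ z, ∑ w, e x * e y * e z * e w * (dl19 x y * dl19 x z * dl19 x w)
    = ∑ x, e x ^ 4 := by
  have hw : ∀ x y z : β, (∑ w, e x * e y * e z * e w * (dl19 x y * dl19 x z * dl19 x w))
      = e x * e y * e z * e x * (dl19 x y * dl19 x z) := fun x y z => by
    rw [← col19 (fun w => e x * e y * e z * e w * (dl19 x y * dl19 x z)) x]
    exact sum_congr rfl fun w _ => by ring
  have hz : ∀ x y : β, (∑ z, e x * e y * e z * e x * (dl19 x y * dl19 x z))
      = e x * e y * e x * e x * dl19 x y := fun x y => by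
    rw [← col19 (fun z => e x * e y * e z * e x * dl19 x y) x]
    exact sum_congr rfl fun z _ => by ring
  have hy : ∀ x : β, (∑ y, e x * e y * e x * e x * dl19 x y)
      = e x * e x * e x * e x := fun x => by
    rw [← col19 (fun y => e x * e y * e x * e x) x]
  have hx : (∑ x, e x * e x * e x * e x) = ∑ x, e x ^ 4 :=
    sum_congr rfl fun x _ => by ring
  simp only [hw, hz, hy, hx]

set_option maxHeartbeats 3200000 in
lemma quad_eval19 (R : ℕ → ℝ) :
    ∑ x, ∑ y, ∑ z, ∑ w, (e x * e y * e z * e w * R (({x, y, z, w} : Finset β).card))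
      = 3 * (R 2 - 2 * R 3 + R 4) * (∑ x, e x ^ 2) ^ 2
        + (R 1 - 7 * R 2 + 12 * R 3 - 6 * R 4) * ∑ x, e x ^ 4 := by
  have expand : ∀ x y z w : β,
      e x * e y * e z * e w * R (({x, y, z, w} : Finset β).card)
      = R 4 * (e x * e y * e z * e w)
        + (R 3 - R 4) * (e x * e y * e z * e w * dl19 x y)
        + (R 3 - R 4) * (e x * e y * e z * e w * dl19 x z)
        + (R 3 - R 4) * (e x * e y * e z * e w * dl19 x w)
        + (R 3 - R 4) * (e x * e y * e z * e w * dl19 y z)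
        + (R 3 - R 4) * (e x * e y * e z * e w * dl19 y w)
        + (R 3 - R 4) * (e x * e y * e z * e w * dl19 z w)
        + (R 2 - 2 * R 3 + R 4) * (e x * e y * e z * e w * (dl19 x y * dl19 z w))
        + (R 2 - 2 * R 3 + R 4) * (e x * e y * e z * e w * (dl19 x z * dl19 y w))
        + (R 2 - 2 * R 3 + R 4) * (e x * e y * e z * e w * (dl19 x w * dl19 y z))
        + (R 2 - 3 * R 3 + 2 * R 4) * (e x * e y * e z * e w * (dl19 x y * dl19 x z))
        + (R 2 - 3 * R 3 + 2 * R 4) * (e x * e y * e z * e w * (dl19 x y * dl19 x w))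
        + (R 2 - 3 * R 3 + 2 * R 4) * (e x * e y * e z * e w * (dl19 x z * dl19 x w))
        + (R 2 - 3 * R 3 + 2 * R 4) * (e x * e y * e z * e w * (dl19 y z * dl19 y w))
        + (R 1 - 7 * R 2 + 12 * R 3 - 6 * R 4)
            * (e x * e y * e z * e w * (dl19 x y * dl19 x z * dl19 x w)) := by
    intro x y z w; rw [delta_expand19 R x y z w]; ring
  simp only [expand, Finset.sum_add_distrib, ← Finset.mul_sum]
  simp only [h1, mul_zero, Finset.sum_const_zero]
  rw [m19_xy e h1, m19_xz e h1, m19_xw e h1, m19_yz e h1, m19_yw e h1, m19_zw e h1,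
    m19_xy_zw e h1, m19_xz_yw e h1, m19_xw_yz e h1, m19_t1 e h1, m19_t2 e h1, m19_t3 e h1,
    m19_t4 e h1, m19_quad e h1]
  ring

lemma pair_eval19 (R : ℕ → ℝ) :
    ∑ x, ∑ y, (e x * e y * R (({x, y} : Finset β).card))
      = (R 1 - R 2) * ∑ x, e x ^ 2 := by
  have expand : ∀ x y : β, e x * e y * R (({x, y} : Finset β).card)
      = R 2 * (e x * e y) + (R 1 - R 2) * (e x * e y * dl19 x y) := by
    intro x y; rw [pair_expand19 R x y]; ring
  have m1 : ∑ x, ∑ y, e x * e y * dl19 x y = ∑ x, e x ^ 2 := by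
    have hy : ∀ x : β, (∑ y, e x * e y * dl19 x y) = e x * e x := fun x =>
      col19 (fun y => e x * e y) x
    simp only [hy]
    exact sum_congr rfl fun x _ => by ring
  simp only [expand, Finset.sum_add_distrib, ← Finset.mul_sum, h1, mul_zero,
    Finset.sum_const_zero, zero_add, m1]

end Monomials

section Moments
variable {β : Type*} [Fintype β] [DecidableEq β] (e : β → ℝ)

lemma sum_pow_four19 (f : β → ℝ) :
    (∑ x, f x) ^ 4 = ∑ x, ∑ y, ∑ z, ∑ w, f x * f y * f z * f w := by
  rw [show ((∑ x, f x) ^ 4 = (∑ x, f x) * (∑ x, f x) * (∑ x, f x) * (∑ x, f x)) by ring]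
  simp only [Finset.sum_mul, Finset.mul_sum]
  exact sum_congr rfl fun x _ => sum_congr rfl fun y _ => sum_congr rfl fun z _ =>
    sum_congr rfl fun w _ => by ring

lemma prod_ite_count19 (n : ℕ) (x y z w : β) :
    ∑ S ∈ Finset.powersetCard n (univ : Finset β),
        ((if x ∈ S then e x else 0) * (if y ∈ S then e y else 0) *
          (if z ∈ S then e z else 0) * (if w ∈ S then e w else 0))
      = e x * e y * e z * e w *
        (((Finset.powersetCard n (univ : Finset β)).filter
            (fun S => ({x, y, z, w} : Finset β) ⊆ S)).card : ℝ) := by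
  have h : ∀ S : Finset β,
      ((if x ∈ S then e x else 0) * (if y ∈ S then e y else 0) *
        (if z ∈ S then e z else 0) * (if w ∈ S then e w else 0))
      = if ({x, y, z, w} : Finset β) ⊆ S then e x * e y * e z * e w else 0 := by
    intro S
    by_cases hx : x ∈ S <;> by_cases hy : y ∈ S <;> by_cases hz : z ∈ S <;>
      by_cases hw : w ∈ S <;>
      simp [hx, hy, hz, hw, Finset.insert_subset_iff]
  simp only [h]
  rw [← Finset.sum_filter, Finset.sum_const, nsmul_eq_mul]
  ring

lemma moment4_19 (n : ℕ) :
    ∑ S ∈ Finset.powersetCard n (univ : Finset β), (∑ x ∈ S, e x) ^ 4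
      = ∑ x, ∑ y, ∑ z, ∑ w, e x * e y * e z * e w *
          (((Finset.powersetCard n (univ : Finset β)).filter
              (fun S => ({x, y, z, w} : Finset β) ⊆ S)).card : ℝ) := by
  have hS : ∀ S : Finset β, (∑ x ∈ S, e x) = ∑ x, if x ∈ S then e x else 0 := by
    intro S
    rw [Finset.sum_ite_mem, Finset.univ_inter]
  calc ∑ S ∈ Finset.powersetCard n (univ : Finset β), (∑ x ∈ S, e x) ^ 4
      = ∑ S ∈ Finset.powersetCard n (univ : Finset β), ∑ x, ∑ y, ∑ z, ∑ w,
          ((if x ∈ S then e x else 0) * (if y ∈ S then e y else 0) *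
            (if z ∈ S then e z else 0) * (if w ∈ S then e w else 0)) := by
        exact sum_congr rfl fun S _ => by rw [hS, sum_pow_four19]
    _ = ∑ x, ∑ y, ∑ z, ∑ w, ∑ S ∈ Finset.powersetCard n (univ : Finset β),
          ((if x ∈ S then e x else 0) * (if y ∈ S then e y else 0) *
            (if z ∈ S then e z else 0) * (if w ∈ S then e w else 0)) := by
        rw [Finset.sum_comm]
        refine sum_congr rfl fun x _ => ?_
        rw [Finset.sum_comm]
        refine sum_congr rfl fun y _ => ?_
        rw [Finset.sum_comm]
        refine sum_congr rfl fun z _ => ?_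
        rw [Finset.sum_comm]
    _ = _ := sum_congr rfl fun x _ => sum_congr rfl fun y _ => sum_congr rfl fun z _ =>
          sum_congr rfl fun w _ => prod_ite_count19 e n x y z w

lemma pair_ite_count19 (n : ℕ) (x y : β) :
    ∑ S ∈ Finset.powersetCard n (univ : Finset β),
        ((if x ∈ S then e x else 0) * (if y ∈ S then e y else 0))
      = e x * e y *
        (((Finset.powersetCard n (univ : Finset β)).filter
            (fun S => ({x, y} : Finset β) ⊆ S)).card : ℝ) := by
  have h : ∀ S : Finset β,
      ((if x ∈ S then e x else 0) * (if y ∈ S then e y else 0))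
      = if ({x, y} : Finset β) ⊆ S then e x * e y else 0 := by
    intro S
    by_cases hx : x ∈ S <;> by_cases hy : y ∈ S <;>
      simp [hx, hy, Finset.insert_subset_iff]
  simp only [h]
  rw [← Finset.sum_filter, Finset.sum_const, nsmul_eq_mul]
  ring

lemma moment2_19 (n : ℕ) :
    ∑ S ∈ Finset.powersetCard n (univ : Finset β), (∑ x ∈ S, e x) ^ 2
      = ∑ x, ∑ y, e x * e y *
          (((Finset.powersetCard n (univ : Finset β)).filter
              (fun S => ({x, y} : Finset β) ⊆ S)).card : ℝ) := by
  have hS : ∀ S : Finset β, (∑ x ∈ S, e x) = ∑ x, if x ∈ S then e x else 0 := by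
    intro S
    rw [Finset.sum_ite_mem, Finset.univ_inter]
  calc ∑ S ∈ Finset.powersetCard n (univ : Finset β), (∑ x ∈ S, e x) ^ 2
      = ∑ S ∈ Finset.powersetCard n (univ : Finset β), ∑ x, ∑ y,
          ((if x ∈ S then e x else 0) * (if y ∈ S then e y else 0)) := by
        refine sum_congr rfl fun S _ => ?_
        rw [hS, sq, Finset.sum_mul_sum]
    _ = ∑ x, ∑ y, ∑ S ∈ Finset.powersetCard n (univ : Finset β),
          ((if x ∈ S then e x else 0) * (if y ∈ S then e y else 0)) := by
        rw [Finset.sum_comm]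
        refine sum_congr rfl fun x _ => ?_
        rw [Finset.sum_comm]
    _ = _ := sum_congr rfl fun x _ => sum_congr rfl fun y _ => pair_ite_count19 e n x y

end Moments

lemma choose_step19 {d n k : ℕ} (hk : k + 1 ≤ n) (hdn : d = 2 * n) :
    2 * (d - (k + 1)).choose (n - (k + 1)) ≤ (d - k).choose (n - k) := by
  have h := Nat.add_one_mul_choose_eq (d - k - 1) (n - k - 1)
  have e1 : d - k - 1 + 1 = d - k := by omega
  have e2 : n - k - 1 + 1 = n - k := by omega
  rw [e1, e2] at h
  -- h : (d - k) * (d - k - 1).choose (n - k - 1) = (d - k).choose (n - k) * (n - k)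
  have e3 : d - (k + 1) = d - k - 1 := by omega
  have e4 : n - (k + 1) = n - k - 1 := by omega
  rw [e3, e4]
  have hnk : 0 < n - k := by omega
  have hle : 2 * (n - k) ≤ d - k := by omega
  have key : 2 * (d - k - 1).choose (n - k - 1) * (n - k)
      ≤ (d - k).choose (n - k) * (n - k) := by
    calc 2 * (d - k - 1).choose (n - k - 1) * (n - k)
        = (2 * (n - k)) * (d - k - 1).choose (n - k - 1) := by ring
      _ ≤ (d - k) * (d - k - 1).choose (n - k - 1) :=
          Nat.mul_le_mul_right _ hle
      _ = (d - k).choose (n - k) * (n - k) := h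
  exact Nat.le_of_mul_le_mul_right key hnk

lemma choose_half19 {d n : ℕ} (hn : 1 ≤ n) (hdn : d = 2 * n) :
    2 * (d - 1).choose (n - 1) = d.choose n := by
  have h := Nat.add_one_mul_choose_eq (d - 1) (n - 1)
  have e1 : d - 1 + 1 = d := by omega
  have e2 : n - 1 + 1 = n := by omega
  rw [e1, e2] at h
  -- h : d * (d-1).choose (n-1) = d.choose n * n
  have key : 2 * (d - 1).choose (n - 1) * n = d.choose n * n := by
    calc 2 * (d - 1).choose (n - 1) * n = (2 * n) * (d - 1).choose (n - 1) := by ring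
      _ = d * (d - 1).choose (n - 1) := by rw [← hdn]
      _ = d.choose n * n := h
  exact Nat.eq_of_mul_eq_mul_right (by omega) key

set_option maxHeartbeats 3200000 in
/-- let `d > 2` be even, `α > 0`, and `P` a probability
distribution on `[d]` with `‖P - U‖₁ = Σ_x |P(x) - 1/d| > α √(10 d)`. If `S` is
a uniformly random subset of `[d]` of size `d/2`, then
`Pr_S[|1/2 - P(S)| > α] > 1/477`. -/
theorem stmt_19 (d : ℕ) (hd2 : 2 < d) (hd : Even d) (α : ℝ) (hα : 0 < α)
    (P : Fin d → ℝ) (hP0 : ∀ x, 0 ≤ P x) (hP1 : ∑ x, P x = 1)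
    (hfar : α * Real.sqrt (10 * d) < ∑ x, |P x - 1 / (d : ℝ)|) :
    1 / 477 <
      (((Finset.powersetCard (d / 2) (Finset.univ : Finset (Fin d))).filter
          (fun S => α < |1 / 2 - ∑ x ∈ S, P x|)).card : ℝ)
        / ((Finset.powersetCard (d / 2) (Finset.univ : Finset (Fin d))).card : ℝ) := by
  classical
  set n := d / 2 with hn
  have hdn : d = 2 * n := by
    obtain ⟨m, hm⟩ := hd
    omega
  have hn2 : 2 ≤ n := by omega
  have hnd : n ≤ d := by omega
  have hd0R : (0 : ℝ) < d := by
    have : 0 < d := by omega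
    exact_mod_cast this
  -- the centered weights
  set e : Fin d → ℝ := fun x => P x - 1 / (d : ℝ) with he
  have h1 : ∑ x, e x = 0 := by
    simp only [he, Finset.sum_sub_distrib, hP1, Finset.sum_const, Finset.card_univ,
      Fintype.card_fin, nsmul_eq_mul]
    field_simp
    norm_num
  set m2 : ℝ := ∑ x, e x ^ 2 with hm2def
  set m4 : ℝ := ∑ x, e x ^ 4 with hm4def
  have hm2nonneg : 0 ≤ m2 := Finset.sum_nonneg fun x _ => by positivity
  have hm4nonneg : 0 ≤ m4 := Finset.sum_nonneg fun x _ => by positivity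
  have hm4le : m4 ≤ m2 ^ 2 := by
    have h := Finset.sum_sq_le_sq_sum_of_nonneg
      (s := (Finset.univ : Finset (Fin d))) (f := fun x => e x ^ 2)
      (fun x _ => by positivity)
    calc m4 = ∑ x, (e x ^ 2) ^ 2 := Finset.sum_congr rfl fun x _ => by ring
      _ ≤ (∑ x, e x ^ 2) ^ 2 := h
      _ = m2 ^ 2 := rfl
  -- ℓ² lower bound from the ℓ¹ assumption
  have hm2 : 10 * α ^ 2 < m2 := by
    have hfar' : α * Real.sqrt (10 * d) < ∑ x, |e x| := hfar
    have hCS : (∑ x : Fin d, |e x| * 1) ^ 2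
        ≤ (∑ x : Fin d, |e x| ^ 2) * (∑ x : Fin d, (1 : ℝ) ^ 2) :=
      Finset.sum_mul_sq_le_sq_mul_sq Finset.univ _ _
    have hCS' : (∑ x, |e x|) ^ 2 ≤ m2 * d := by
      have h2 : (∑ x : Fin d, |e x| * 1) = ∑ x, |e x| := by simp
      have h3 : (∑ x : Fin d, |e x| ^ 2) = m2 := by
        simp only [sq_abs]
        rfl
      have h4 : (∑ x : Fin d, (1 : ℝ) ^ 2) = d := by
        simp [Finset.card_univ]
      rwa [h2, h3, h4] at hCS
    have hlhs : 0 ≤ α * Real.sqrt (10 * d) := by positivity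
    have hsq : (α * Real.sqrt (10 * d)) ^ 2 < (∑ x, |e x|) ^ 2 :=
      pow_lt_pow_left₀ hfar' hlhs two_ne_zero
    have hval : (α * Real.sqrt (10 * d)) ^ 2 = α ^ 2 * (10 * d) := by
      rw [mul_pow, Real.sq_sqrt (by positivity)]
    have hchain : α ^ 2 * (10 * d) < m2 * d := by
      calc α ^ 2 * (10 * d) = (α * Real.sqrt (10 * d)) ^ 2 := hval.symm
        _ < (∑ x, |e x|) ^ 2 := hsq
        _ ≤ m2 * d := hCS'
    nlinarith [hd0R]
  have hm2pos : 0 < m2 := by nlinarith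
  -- binomial counting function
  set R : ℕ → ℝ := fun k => if k ≤ n then (((d - k).choose (n - k) : ℕ) : ℝ) else 0
    with hRdef
  have hcnt : ∀ T : Finset (Fin d),
      (((Finset.powersetCard n (Finset.univ : Finset (Fin d))).filter
          (fun S => T ⊆ S)).card : ℝ) = R T.card := by
    intro T
    rw [count_sup19 n T, hRdef]
    split_ifs with h
    · simp [Fintype.card_fin, h]
    · simp [h]
  set N : ℝ := ((Finset.powersetCard n (Finset.univ : Finset (Fin d))).card : ℝ) with hNdef
  have hNchoose : N = ((d.choose n : ℕ) : ℝ) := by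
    rw [hNdef, Finset.card_powersetCard, Finset.card_univ, Fintype.card_fin]
  have hN0 : (0 : ℝ) < N := by
    rw [hNchoose]
    exact_mod_cast Nat.choose_pos hnd
  -- counting inequalities
  have hRnonneg : ∀ k, 0 ≤ R k := by
    intro k
    rw [hRdef]
    dsimp only
    split_ifs <;> positivity
  have hstep : ∀ k : ℕ, 2 * R (k + 1) ≤ R k := by
    intro k
    rw [hRdef]
    simp only
    split_ifs with h1' h2' h2'
    · exact_mod_cast choose_step19 h1' hdn
    · omega
    · have : (0 : ℝ) ≤ (((d - k).choose (n - k) : ℕ) : ℝ) := by positivity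
      linarith
    · norm_num
  have hR1 : 2 * R 1 = N := by
    rw [hRdef]
    simp only [if_pos (by omega : 1 ≤ n)]
    rw [hNchoose]
    exact_mod_cast choose_half19 (by omega) hdn
  have hR2 : 2 * R 2 ≤ R 1 := hstep 1
  have hR3 : 2 * R 3 ≤ R 2 := hstep 2
  have hR4 : 2 * R 4 ≤ R 3 := hstep 3
  -- moments
  have hQ2 : ∑ S ∈ Finset.powersetCard n (Finset.univ : Finset (Fin d)),
      (∑ x ∈ S, e x) ^ 2 = (R 1 - R 2) * m2 := by
    rw [moment2_19 e n]
    simp only [hcnt]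
    exact pair_eval19 e h1 R
  have hQ4 : ∑ S ∈ Finset.powersetCard n (Finset.univ : Finset (Fin d)),
      (∑ x ∈ S, e x) ^ 4
      = 3 * (R 2 - 2 * R 3 + R 4) * m2 ^ 2
        + (R 1 - 7 * R 2 + 12 * R 3 - 6 * R 4) * m4 := by
    rw [moment4_19 e n]
    simp only [hcnt]
    exact quad_eval19 e h1 R
  have hQ2ge : N / 4 * m2 ≤ ∑ S ∈ Finset.powersetCard n (Finset.univ : Finset (Fin d)),
      (∑ x ∈ S, e x) ^ 2 := by
    rw [hQ2]
    have : N / 4 ≤ R 1 - R 2 := by linarith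
    exact mul_le_mul_of_nonneg_right this hm2nonneg
  have hQ4le : (∑ S ∈ Finset.powersetCard n (Finset.univ : Finset (Fin d)),
      (∑ x ∈ S, e x) ^ 4) ≤ 47 / 16 * N * m2 ^ 2 := by
    rw [hQ4]
    have hCle : R 2 - 2 * R 3 + R 4 ≤ 5 / 16 * N := by linarith [hRnonneg 3]
    have hEle : R 1 - 7 * R 2 + 12 * R 3 - 6 * R 4 ≤ 2 * N := by
      linarith [hRnonneg 2, hRnonneg 4]
    have hC' : 3 * (R 2 - 2 * R 3 + R 4) * m2 ^ 2 ≤ 15 / 16 * N * m2 ^ 2 := by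
      nlinarith [sq_nonneg m2]
    have hE' : (R 1 - 7 * R 2 + 12 * R 3 - 6 * R 4) * m4 ≤ 2 * N * m2 ^ 2 := by
      rcases le_or_gt 0 (R 1 - 7 * R 2 + 12 * R 3 - 6 * R 4) with hE | hE
      · calc (R 1 - 7 * R 2 + 12 * R 3 - 6 * R 4) * m4
            ≤ (R 1 - 7 * R 2 + 12 * R 3 - 6 * R 4) * m2 ^ 2 :=
              mul_le_mul_of_nonneg_left hm4le hE
          _ ≤ 2 * N * m2 ^ 2 := mul_le_mul_of_nonneg_right hEle (sq_nonneg m2)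
      · have h0 : (R 1 - 7 * R 2 + 12 * R 3 - 6 * R 4) * m4 ≤ 0 :=
          mul_nonpos_of_nonpos_of_nonneg (le_of_lt hE) hm4nonneg
        have : (0 : ℝ) ≤ 2 * N * m2 ^ 2 := mul_nonneg (mul_nonneg (by norm_num) hN0.le) (sq_nonneg m2)
        linarith
    linarith
  -- connection between the event and the centered sum
  have hXP : ∀ S ∈ Finset.powersetCard n (Finset.univ : Finset (Fin d)),
      (1 / 2 - ∑ x ∈ S, P x) = -(∑ x ∈ S, e x) := by
    intro S hS
    have hcard : S.card = n := (Finset.mem_powersetCard.1 hS).2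
    have hsum : ∑ x ∈ S, e x = (∑ x ∈ S, P x) - n * (1 / (d : ℝ)) := by
      rw [he]
      rw [Finset.sum_sub_distrib, Finset.sum_const, hcard, nsmul_eq_mul]
    have hdR : (d : ℝ) = 2 * (n : ℝ) := by exact_mod_cast hdn
    have hnR : (0 : ℝ) < (n : ℝ) := by
      have : 0 < n := by omega
      exact_mod_cast this
    have hhalf : (n : ℝ) * (1 / (d : ℝ)) = 1 / 2 := by
      rw [hdR]
      field_simp
    rw [hsum, hhalf]
    ring
  -- the split of the second moment
  set F := Finset.powersetCard n (Finset.univ : Finset (Fin d)) with hF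
  set p : Finset (Fin d) → Prop := fun S => α < |1 / 2 - ∑ x ∈ S, P x| with hp
  set G := F.filter p with hG
  set K : ℝ := (G.card : ℝ) with hK
  have hK0 : 0 ≤ K := Nat.cast_nonneg _
  have hsplit : (∑ S ∈ F, (∑ x ∈ S, e x) ^ 2)
      = (∑ S ∈ G, (∑ x ∈ S, e x) ^ 2)
        + ∑ S ∈ F.filter (fun S => ¬ p S), (∑ x ∈ S, e x) ^ 2 := by
    rw [hG]
    exact (Finset.sum_filter_add_sum_filter_not F p _).symm
  have hbad : (∑ S ∈ F.filter (fun S => ¬ p S), (∑ x ∈ S, e x) ^ 2) ≤ α ^ 2 * N := by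
    have hptwise : ∀ S ∈ F.filter (fun S => ¬ p S), (∑ x ∈ S, e x) ^ 2 ≤ α ^ 2 := by
      intro S hS
      obtain ⟨hSF, hnot⟩ := Finset.mem_filter.1 hS
      rw [hp] at hnot
      have habs : |∑ x ∈ S, e x| ≤ α := by
        rw [← abs_neg, ← hXP S hSF]
        exact not_lt.1 hnot
      calc (∑ x ∈ S, e x) ^ 2 = |∑ x ∈ S, e x| ^ 2 := (sq_abs _).symm
        _ ≤ α ^ 2 := pow_le_pow_left₀ (abs_nonneg _) habs 2
    calc (∑ S ∈ F.filter (fun S => ¬ p S), (∑ x ∈ S, e x) ^ 2)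
        ≤ ∑ _S ∈ F.filter (fun S => ¬ p S), α ^ 2 := Finset.sum_le_sum hptwise
      _ = ((F.filter (fun S => ¬ p S)).card : ℝ) * α ^ 2 := by
          rw [Finset.sum_const, nsmul_eq_mul]
      _ ≤ N * α ^ 2 := by
          have hcard : ((F.filter (fun S => ¬ p S)).card : ℝ) ≤ N := by
            rw [hNdef]
            exact_mod_cast Finset.card_filter_le F _
          nlinarith [sq_nonneg α]
      _ = α ^ 2 * N := by ring
  have hgood : 3 / 20 * N * m2 < ∑ S ∈ G, (∑ x ∈ S, e x) ^ 2 := by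
    have hαN : α ^ 2 * N < m2 / 10 * N := by
      have : α ^ 2 < m2 / 10 := by linarith
      exact mul_lt_mul_of_pos_right this hN0
    have := hQ2ge
    rw [hsplit] at this
    linarith
  -- Cauchy–Schwarz on the good set
  have hCS2 : (∑ S ∈ G, (∑ x ∈ S, e x) ^ 2) ^ 2
      ≤ (∑ S ∈ G, (∑ x ∈ S, e x) ^ 4) * K := by
    have h := Finset.sum_mul_sq_le_sq_mul_sq G (fun S => (∑ x ∈ S, e x) ^ 2)
      (fun _ => (1 : ℝ))
    have h2 : (∑ S ∈ G, (∑ x ∈ S, e x) ^ 2 * 1) = ∑ S ∈ G, (∑ x ∈ S, e x) ^ 2 := by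
      simp
    have h3 : (∑ S ∈ G, ((∑ x ∈ S, e x) ^ 2) ^ 2) = ∑ S ∈ G, (∑ x ∈ S, e x) ^ 4 :=
      Finset.sum_congr rfl fun S _ => by ring
    have h4 : (∑ _S ∈ G, (1 : ℝ) ^ 2) = K := by simp [hK]
    rw [h2, h3, h4] at h
    exact h
  have hG4 : (∑ S ∈ G, (∑ x ∈ S, e x) ^ 4) ≤ ∑ S ∈ F, (∑ x ∈ S, e x) ^ 4 := by
    apply Finset.sum_le_sum_of_subset_of_nonneg (Finset.filter_subset p F)
    intro S _ _
    positivity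
  -- final arithmetic
  have hfinal : 9 / 400 * (N * m2) ^ 2 < 47 / 16 * N * m2 ^ 2 * K := by
    calc 9 / 400 * (N * m2) ^ 2 = (3 / 20 * N * m2) ^ 2 := by ring
      _ < (∑ S ∈ G, (∑ x ∈ S, e x) ^ 2) ^ 2 := by
          apply pow_lt_pow_left₀ hgood (mul_nonneg (mul_nonneg (by norm_num) hN0.le) hm2nonneg) two_ne_zero
      _ ≤ (∑ S ∈ G, (∑ x ∈ S, e x) ^ 4) * K := hCS2
      _ ≤ (∑ S ∈ F, (∑ x ∈ S, e x) ^ 4) * K := mul_le_mul_of_nonneg_right hG4 hK0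
      _ ≤ 47 / 16 * N * m2 ^ 2 * K := mul_le_mul_of_nonneg_right hQ4le hK0
  have hKN : 9 / 400 * N < 47 / 16 * K := by
    have hpos : (0 : ℝ) < N * m2 ^ 2 := mul_pos hN0 (pow_pos hm2pos 2)
    have h' : (9 / 400 * N) * (N * m2 ^ 2) < (47 / 16 * K) * (N * m2 ^ 2) := by
      nlinarith [hfinal]
    exact lt_of_mul_lt_mul_right h' (le_of_lt hpos)
  rw [lt_div_iff₀ hN0]
  linarith
end
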